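/- arXiv:1111.5700 — 4 statements merged into one kernel-verified Lean document; each statement's English description precedes it below -/
import Mathlib

section
/- Let γ and η be real numbers with γ > η + 1 > 0. Then there exist constants 0 < c ≤ C < ∞, depending only on γ and η, such that for all real numbers 0 < B < A < D one has c · [(D−B) A^{η+1} (A−B)^{γ−η−1}]^{-1} ≤ ∫_{-1}^{1} (1−s²)^η / ((D−Bs)(A−Bs)^γ) ds ≤ C · [(D−B) A^{η+1} (A−B)^{γ−η−1}]^{-1}. -/
open MeasureTheory Real Set

lemma fb_aux_ub (η : ℝ) {t : ℝ} (h1 : 1 ≤ t) (h2 : t ≤ 2) : t ^ η ≤ max 1 ((2:ℝ) ^ η) := by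
  rcases le_or_gt 0 η with h | h
  · exact le_max_of_le_right (Real.rpow_le_rpow (by linarith) h2 h)
  · exact le_max_of_le_left (Real.rpow_le_one_of_one_le_of_nonpos h1 h.le)

lemma fb_aux_lb (η : ℝ) {t : ℝ} (h1 : 1 ≤ t) (h2 : t ≤ 2) : min 1 ((2:ℝ) ^ η) ≤ t ^ η := by
  rcases le_or_gt 0 η with h | h
  · refine min_le_of_left_le ?_
    calc (1:ℝ) = 1 ^ η := (Real.one_rpow η).symm
    _ ≤ t ^ η := Real.rpow_le_rpow zero_le_one h1 h
  · exact min_le_of_right_le (Real.rpow_le_rpow_of_nonpos (by linarith) h2 h.le)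

lemma fb_num_ub (η : ℝ) {s : ℝ} (h0 : 0 ≤ s) (h1 : s ≤ 1) :
    (1 - s ^ 2) ^ η ≤ max 1 ((2:ℝ) ^ η) * (1 - s) ^ η := by
  have hs : (1 - s ^ 2) = (1 - s) * (1 + s) := by ring
  rw [hs, Real.mul_rpow (by linarith) (by linarith)]
  calc (1 - s) ^ η * (1 + s) ^ η ≤ (1 - s) ^ η * max 1 ((2:ℝ) ^ η) :=
        mul_le_mul_of_nonneg_left (fb_aux_ub η (by linarith) (by linarith))
          (Real.rpow_nonneg (by linarith) _)
  _ = max 1 ((2:ℝ) ^ η) * (1 - s) ^ η := mul_comm _ _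

lemma fb_num_ub' (η : ℝ) {s : ℝ} (h0 : -1 ≤ s) (h1 : s ≤ 0) :
    (1 - s ^ 2) ^ η ≤ max 1 ((2:ℝ) ^ η) * (1 + s) ^ η := by
  have hs : (1 - s ^ 2) = (1 + s) * (1 - s) := by ring
  rw [hs, Real.mul_rpow (by linarith) (by linarith)]
  calc (1 + s) ^ η * (1 - s) ^ η ≤ (1 + s) ^ η * max 1 ((2:ℝ) ^ η) :=
        mul_le_mul_of_nonneg_left (fb_aux_ub η (by linarith) (by linarith))
          (Real.rpow_nonneg (by linarith) _)
  _ = max 1 ((2:ℝ) ^ η) * (1 + s) ^ η := mul_comm _ _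

lemma fb_num_lb (η : ℝ) {s : ℝ} (h0 : 0 ≤ s) (h1 : s ≤ 1) :
    min 1 ((2:ℝ) ^ η) * (1 - s) ^ η ≤ (1 - s ^ 2) ^ η := by
  have hs : (1 - s ^ 2) = (1 - s) * (1 + s) := by ring
  rw [hs, Real.mul_rpow (by linarith) (by linarith)]
  calc min 1 ((2:ℝ) ^ η) * (1 - s) ^ η = (1 - s) ^ η * min 1 ((2:ℝ) ^ η) := mul_comm _ _
  _ ≤ (1 - s) ^ η * (1 + s) ^ η :=
        mul_le_mul_of_nonneg_left (fb_aux_lb η (by linarith) (by linarith))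
          (Real.rpow_nonneg (by linarith) _)

lemma fb_sq {s : ℝ} (h1 : -1 ≤ s) (h2 : s ≤ 1) : 0 ≤ 1 - s ^ 2 := by nlinarith

lemma fb_sq' {s : ℝ} (h1 : -1 < s) (h2 : s < 1) : 0 < 1 - s ^ 2 := by
  nlinarith [mul_pos (by linarith : (0:ℝ) < 1 - s) (by linarith : (0:ℝ) < 1 + s)]

lemma fb_lin1 {B D s : ℝ} (hB : 0 < B) (hs : s ≤ 1) : D - B ≤ D - B * s := by nlinarith

lemma fb_lin3 {A B s : ℝ} (hAB : 0 < A - B) (hA2B : A < 2*B) (hs : s ≤ 1) :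
    A/2*(1-s) ≤ A - B*s := by
  nlinarith [mul_nonneg (by linarith : (0:ℝ) ≤ B - A/2) (by linarith : (0:ℝ) ≤ 1-s)]

lemma fb_lin2 {B A s : ℝ} (hB : 0 < B) (hs : s ≤ 0) : A ≤ A - B * s := by nlinarith

set_option maxHeartbeats 4000000 in
/-- **Lemma 3.3 (Nowak–Roncal).** For `γ > η + 1 > 0` one has
`∫_{-1}^1 (1-s²)^η / ((D-Bs)(A-Bs)^γ) ds ≃ [(D-B) A^{η+1} (A-B)^{γ-η-1}]⁻¹`,
uniformly in `0 < B < A < D`. -/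
theorem fb_integral_lemma (γ η : ℝ) (hη : 0 < η + 1) (hγ : η + 1 < γ) :
    ∃ c C : ℝ, 0 < c ∧ c ≤ C ∧
      ∀ A B D : ℝ, 0 < B → B < A → A < D →
        (c * ((D - B) * A ^ (η + 1) * (A - B) ^ (γ - η - 1))⁻¹ ≤
            ∫ s in Set.Ioo (-1 : ℝ) 1,
              (1 - s ^ 2) ^ η / ((D - B * s) * (A - B * s) ^ γ)) ∧
          (∫ s in Set.Ioo (-1 : ℝ) 1,
              (1 - s ^ 2) ^ η / ((D - B * s) * (A - B * s) ^ γ)) ≤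
            C * ((D - B) * A ^ (η + 1) * (A - B) ^ (γ - η - 1))⁻¹ := by
  have hη' : (-1:ℝ) < η := by linarith
  have hγ0 : (0:ℝ) < γ := by linarith
  have hge : (0:ℝ) < γ - η - 1 := by linarith
  set m : ℝ := max 1 ((2:ℝ) ^ η) with hm
  set m' : ℝ := min 1 ((2:ℝ) ^ η) with hm'
  clear_value m m'
  have hm1 : 1 ≤ m := by rw [hm]; exact le_max_left _ _
  have h2η : (0:ℝ) < (2:ℝ) ^ η := Real.rpow_pos_of_pos two_pos η
  have hm'0 : 0 < m' := by rw [hm']; exact lt_min one_pos h2η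
  have hm'1 : m' ≤ 1 := by rw [hm']; exact min_le_left _ _
  refine ⟨m' * (2/3) ^ (γ + 1) / ((2:ℝ) ^ (η + 1) * (η + 1)),
    m * ((η + 1)⁻¹ + (2:ℝ) ^ γ * (γ - η - 1)⁻¹ + (2:ℝ) ^ (η + 1) * (η + 1)⁻¹), ?_, ?_, ?_⟩
  · exact div_pos (mul_pos hm'0 (Real.rpow_pos_of_pos (by norm_num) _))
      (mul_pos (Real.rpow_pos_of_pos two_pos _) hη)
  · have h23 : ((2:ℝ)/3) ^ (γ+1) ≤ 1 :=
      Real.rpow_le_one (by norm_num) (by norm_num) (by linarith)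
    have h2e : (1:ℝ) ≤ (2:ℝ) ^ (η+1) := Real.one_le_rpow one_le_two (by linarith)
    have hnum : m' * (2/3) ^ (γ+1) ≤ 1 :=
      mul_le_one₀ hm'1 (by positivity) h23
    have hstep : m' * (2/3) ^ (γ+1) / ((2:ℝ) ^ (η+1) * (η+1)) ≤ 1 / (η+1) :=
      div_le_div₀ zero_le_one hnum hη (by nlinarith)
    refine hstep.trans ?_
    have h1 : (0:ℝ) < (η+1)⁻¹ := by positivity
    have h2 : (0:ℝ) ≤ (2:ℝ)^γ * (γ-η-1)⁻¹ := by positivity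
    have h3 : (0:ℝ) ≤ (2:ℝ)^(η+1) * (η+1)⁻¹ := by positivity
    rw [one_div]
    nlinarith
  · intro A B D hB hBA hAD
    have hA : 0 < A := hB.trans hBA
    have hD : 0 < D := hA.trans hAD
    have hAB : 0 < A - B := sub_pos.2 hBA
    have hDB : 0 < D - B := by linarith
    have hABD : A - B ≤ D - B := by linarith
    set F : ℝ → ℝ := fun s => (1 - s ^ 2) ^ η / ((D - B * s) * (A - B * s) ^ γ) with hFdef
    set P : ℝ := (D - B) * A ^ (η + 1) * (A - B) ^ (γ - η - 1) with hPdef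
    clear_value F P
    have hP : 0 < P := by
      rw [hPdef]
      exact mul_pos (mul_pos hDB (Real.rpow_pos_of_pos hA _)) (Real.rpow_pos_of_pos hAB _)
    have hIcc : ∀ s ∈ Icc (-1:ℝ) 1, 0 < D - B * s ∧ 0 < A - B * s := by
      intro s hs
      exact ⟨lt_of_lt_of_le hDB (fb_lin1 hB hs.2), lt_of_lt_of_le hAB (fb_lin1 hB hs.2)⟩
    have hF0 : ∀ s ∈ Icc (-1:ℝ) 1, 0 ≤ F s := by
      intro s hs
      obtain ⟨h1, h2⟩ := hIcc s hs
      have h3 : (0:ℝ) ≤ 1 - s^2 := fb_sq hs.1 hs.2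
      simp only [hFdef]
      exact div_nonneg (Real.rpow_nonneg h3 η)
        (le_of_lt (mul_pos h1 (Real.rpow_pos_of_pos h2 γ)))
    have hFmeas : Measurable F := by
      simp only [hFdef]
      fun_prop
    set u0 : ℝ := min 1 ((A - B)/B) with hu0def
    have hu0pos : 0 < u0 := by rw [hu0def]; exact lt_min one_pos (div_pos hAB hB)
    have hu01 : u0 ≤ 1 := by rw [hu0def]; exact min_le_left _ _
    set s0 : ℝ := 1 - u0 with hs0def
    clear_value u0 s0
    have hs00 : 0 ≤ s0 := by rw [hs0def]; linarith
    have hs01 : s0 < 1 := by rw [hs0def]; linarith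
    have hu0_ge : (A - B)/A ≤ u0 := by
      rw [hu0def]
      refine le_min ?_ ?_
      · rw [div_le_one hA]; linarith
      · exact div_le_div_of_nonneg_left hAB.le hB hBA.le
    have hu0_le : u0 ≤ 2*(A-B)/A := by
      rw [hu0def]
      rcases le_total 1 ((A-B)/B) with h | h
      · rw [min_eq_left h, le_div_iff₀ hA]
        have := (one_le_div hB).1 h
        linarith
      · rw [min_eq_right h, div_le_div_iff₀ hB hA]
        have := (div_le_one hB).1 h
        nlinarith
    -- integrability building blocks
    have iRη : ∀ a b : ℝ, IntervalIntegrable (fun u : ℝ => u ^ η) volume a b :=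
      fun a b => intervalIntegral.intervalIntegrable_rpow' hη'
    have ig1 : IntervalIntegrable (fun s : ℝ => (1 + s) ^ η) volume (-1) 0 := by
      have h := (iRη 0 1).comp_add_right 1
      norm_num at h
      have h2 : (fun s : ℝ => (1 + s) ^ η) = fun s : ℝ => (s + 1) ^ η := by
        funext s; rw [add_comm]
      rw [h2]
      exact h
    have ig3 : ∀ a b : ℝ, IntervalIntegrable (fun s : ℝ => (1 - s) ^ η) volume a b := by
      intro a b
      have h := (iRη (1-a) (1-b)).comp_sub_left 1
      norm_num at h
      exact h
    have ig2 : IntervalIntegrable (fun s : ℝ => (1 - s) ^ (η - γ)) volume 0 s0 := by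
      apply ContinuousOn.intervalIntegrable
      apply ContinuousOn.rpow_const
      · fun_prop
      · intro x hx
        rw [Set.uIcc_of_le hs00] at hx
        exact Or.inl (show (0:ℝ) < 1 - x by linarith [hx.2, hs01]).ne'
    have iF2 : IntervalIntegrable F volume 0 s0 := by
      apply ContinuousOn.intervalIntegrable
      simp only [hFdef]
      rw [Set.uIcc_of_le hs00]
      have hmem : ∀ x ∈ Icc (0:ℝ) s0, x ∈ Icc (-1:ℝ) 1 := by
        intro x hx
        exact ⟨by linarith [hx.1], by linarith [hx.2, hs01]⟩
      have hc1 : ContinuousOn (fun s : ℝ => (1 - s ^ 2) ^ η) (Icc 0 s0) := by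
        apply ContinuousOn.rpow_const
        · fun_prop
        · intro x hx
          have hx1 : x < 1 := lt_of_le_of_lt hx.2 hs01
          exact Or.inl (fb_sq' (by linarith [hx.1]) hx1).ne'
      have hc2 : ContinuousOn (fun s : ℝ => (A - B * s) ^ γ) (Icc 0 s0) := by
        apply ContinuousOn.rpow_const
        · fun_prop
        · intro x hx
          exact Or.inl (hIcc x (hmem x hx)).2.ne'
      have hc3 : ContinuousOn (fun s : ℝ => (D - B * s)) (Icc 0 s0) := by fun_prop
      apply ContinuousOn.div hc1 (hc3.mul hc2)
      intro x hx
      exact mul_ne_zero (hIcc x (hmem x hx)).1.ne'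
        (Real.rpow_pos_of_pos (hIcc x (hmem x hx)).2 γ).ne'
    -- pointwise upper bounds
    set K1 : ℝ := m / ((D - B) * A ^ γ) with hK1
    set K2 : ℝ := m * 2 ^ γ / ((D - B) * A ^ γ) with hK2
    set K3 : ℝ := m / ((D - B) * (A - B) ^ γ) with hK3
    clear_value K1 K2 K3
    have hb1 : ∀ s ∈ Icc (-1:ℝ) 0, F s ≤ K1 * (1 + s) ^ η := by
      intro s hs
      have hsI : s ∈ Icc (-1:ℝ) 1 := ⟨hs.1, by linarith [hs.2]⟩
      obtain ⟨hDs, hAs⟩ := hIcc s hsI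
      have hnum : (1 - s ^ 2) ^ η ≤ m * (1 + s) ^ η := by
        rw [hm]; exact fb_num_ub' η hs.1 hs.2
      have hden : (D - B) * A ^ γ ≤ (D - B*s) * (A - B*s) ^ γ := by
        apply mul_le_mul (fb_lin1 hB (by linarith [hs.2])) (Real.rpow_le_rpow hA.le (fb_lin2 hB hs.2) hγ0.le)
          (Real.rpow_nonneg hA.le γ) hDs.le
      calc F s = (1 - s^2) ^ η / ((D - B*s) * (A - B*s) ^ γ) := by simp only [hFdef]
      _ ≤ (m * (1+s)^η) / ((D - B) * A ^ γ) :=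
          div_le_div₀ (mul_nonneg (by linarith) (Real.rpow_nonneg (by linarith [hs.1]) η))
            hnum (mul_pos hDB (Real.rpow_pos_of_pos hA γ)) hden
      _ = K1 * (1+s)^η := by rw [hK1]; ring
    have hb3 : ∀ s ∈ Icc s0 (1:ℝ), F s ≤ K3 * (1 - s) ^ η := by
      intro s hs
      have hs0' : (0:ℝ) ≤ s := le_trans hs00 hs.1
      have hsI : s ∈ Icc (-1:ℝ) 1 := ⟨by linarith, hs.2⟩
      obtain ⟨hDs, hAs⟩ := hIcc s hsI
      have hnum : (1 - s ^ 2) ^ η ≤ m * (1 - s) ^ η := by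
        rw [hm]; exact fb_num_ub η hs0' hs.2
      have hden : (D - B) * (A - B) ^ γ ≤ (D - B*s) * (A - B*s) ^ γ := by
        apply mul_le_mul (fb_lin1 hB hs.2) (Real.rpow_le_rpow hAB.le (fb_lin1 hB hs.2) hγ0.le)
          (Real.rpow_nonneg hAB.le γ) hDs.le
      calc F s = (1 - s^2) ^ η / ((D - B*s) * (A - B*s) ^ γ) := by simp only [hFdef]
      _ ≤ (m * (1-s)^η) / ((D - B) * (A - B) ^ γ) :=
          div_le_div₀ (mul_nonneg (by linarith) (Real.rpow_nonneg (by linarith [hs.2]) η))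
            hnum (mul_pos hDB (Real.rpow_pos_of_pos hAB γ)) hden
      _ = K3 * (1-s)^η := by rw [hK3]; ring
    have hb2 : ∀ s ∈ Icc (0:ℝ) s0, F s ≤ K2 * (1 - s) ^ (η - γ) := by
      intro s hs
      have hs1 : s < 1 := lt_of_le_of_lt hs.2 hs01
      have h1s : (0:ℝ) < 1 - s := by linarith
      have hsI : s ∈ Icc (-1:ℝ) 1 := ⟨by linarith [hs.1], hs1.le⟩
      obtain ⟨hDs, hAs⟩ := hIcc s hsI
      have hnum : (1 - s ^ 2) ^ η ≤ m * (1 - s) ^ η := by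
        rw [hm]; exact fb_num_ub η hs.1 hs1.le
      have hkey : A/2 * (1 - s) ≤ A - B*s := by
        rcases eq_or_lt_of_le hs.1 with h | h
        · rw [← h]; simp; linarith
        · have hu0lt : u0 < 1 := by
            by_contra hcon
            push_neg at hcon
            have : s0 ≤ 0 := by rw [hs0def]; linarith
            linarith [lt_of_lt_of_le h hs.2]
          have hτ : (A-B)/B < 1 := by
            rcases min_lt_iff.1 (show min 1 ((A-B)/B) < 1 from hu0def ▸ hu0lt) with h' | h'
            · exact absurd h' (lt_irrefl 1)
            · exact h'
          have hA2B : A < 2*B := by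
            rw [div_lt_one hB] at hτ; linarith
          exact fb_lin3 hAB hA2B hs1.le
      have hden : (D - B) * (A/2 * (1-s)) ^ γ ≤ (D - B*s) * (A - B*s) ^ γ := by
        apply mul_le_mul (fb_lin1 hB hs1.le) (Real.rpow_le_rpow (by positivity) hkey hγ0.le)
          (Real.rpow_nonneg (by positivity) γ) hDs.le
      calc F s = (1 - s^2) ^ η / ((D - B*s) * (A - B*s) ^ γ) := by simp only [hFdef]
      _ ≤ (m * (1-s)^η) / ((D - B) * (A/2 * (1-s)) ^ γ) :=
          div_le_div₀ (mul_nonneg (by linarith) (Real.rpow_nonneg h1s.le η))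
            hnum (mul_pos hDB (Real.rpow_pos_of_pos (by positivity) γ)) hden
      _ = K2 * (1-s)^(η-γ) := by
          rw [hK2, Real.mul_rpow (by positivity) h1s.le, Real.div_rpow hA.le (by norm_num) γ,
            Real.rpow_sub h1s]
          have hne1 : ((2:ℝ))^γ ≠ 0 := (Real.rpow_pos_of_pos two_pos γ).ne'
          have hne2 : (A:ℝ)^γ ≠ 0 := (Real.rpow_pos_of_pos hA γ).ne'
          have hne3 : ((1:ℝ)-s)^γ ≠ 0 := (Real.rpow_pos_of_pos h1s γ).ne'
          field_simp
    -- dominated integrability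
    have iF1 : IntervalIntegrable F volume (-1) 0 := by
      apply IntervalIntegrable.mono_fun' (ig1.const_mul K1) hFmeas.aestronglyMeasurable
      rw [Set.uIoc_of_le (by norm_num : (-1:ℝ) ≤ 0)]
      filter_upwards [ae_restrict_mem measurableSet_Ioc] with s hs
      rw [Real.norm_of_nonneg (hF0 s ⟨hs.1.le, by linarith [hs.2]⟩)]
      exact hb1 s ⟨hs.1.le, hs.2⟩
    have iF3 : IntervalIntegrable F volume s0 1 := by
      apply IntervalIntegrable.mono_fun' ((ig3 s0 1).const_mul K3) hFmeas.aestronglyMeasurable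
      rw [Set.uIoc_of_le hs01.le]
      filter_upwards [ae_restrict_mem measurableSet_Ioc] with s hs
      rw [Real.norm_of_nonneg (hF0 s ⟨by linarith [hs.1, hs00], hs.2⟩)]
      exact hb3 s ⟨hs.1.le, hs.2⟩
    have iFfull : IntervalIntegrable F volume (-1) 1 := (iF1.trans iF2).trans iF3
    -- integral computations
    have E1 : (∫ s in (-1:ℝ)..0, (1 + s) ^ η) = 1/(η+1) := by
      have h0 : (∫ s in (-1:ℝ)..0, (1 + s) ^ η) = ∫ s in (-1:ℝ)..0, (s + 1) ^ η := by
        apply intervalIntegral.integral_congr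
        intro x _
        show (1 + x) ^ η = (x + 1) ^ η
        rw [add_comm]
      rw [h0, intervalIntegral.integral_comp_add_right (fun u : ℝ => u ^ η) 1]
      norm_num
      rw [integral_rpow (Or.inl hη')]
      rw [Real.one_rpow, Real.zero_rpow (by linarith : η + 1 ≠ 0)]
      norm_num
    have E3gen : ∀ a : ℝ, (∫ s in a..(1:ℝ), (1 - s) ^ η) = (1-a)^(η+1)/(η+1) := by
      intro a
      rw [intervalIntegral.integral_comp_sub_left (fun u : ℝ => u ^ η) 1]
      norm_num
      rw [integral_rpow (Or.inl hη')]
      rw [Real.zero_rpow (by linarith : η + 1 ≠ 0)]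
      norm_num
    have E3 : (∫ s in s0..(1:ℝ), (1 - s) ^ η) = u0^(η+1)/(η+1) := by
      rw [E3gen s0, hs0def]
      norm_num
    have E2 : (∫ s in (0:ℝ)..s0, (1 - s) ^ (η - γ)) = (1 - u0^(η-γ+1))/(η-γ+1) := by
      rw [intervalIntegral.integral_comp_sub_left (fun u : ℝ => u ^ (η - γ)) 1]
      have h1 : (1:ℝ) - s0 = u0 := by rw [hs0def]; ring
      have h2 : (1:ℝ) - 0 = 1 := by norm_num
      rw [h1, h2, integral_rpow (Or.inr ⟨by linarith, ?_⟩)]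
      · rw [Real.one_rpow]
      · rw [Set.uIcc_of_le hu01]
        intro hmem
        linarith [hmem.1]
    -- upper bound assembly
    have hsplit : (∫ s in (-1:ℝ)..1, F s)
        = (∫ s in (-1:ℝ)..0, F s) + (∫ s in (0:ℝ)..s0, F s) + ∫ s in s0..(1:ℝ), F s := by
      rw [intervalIntegral.integral_add_adjacent_intervals iF1 iF2,
          intervalIntegral.integral_add_adjacent_intervals (iF1.trans iF2) iF3]
    have hJ1 : (∫ s in (-1:ℝ)..0, F s) ≤ K1 * (1/(η+1)) := by
      calc (∫ s in (-1:ℝ)..0, F s) ≤ ∫ s in (-1:ℝ)..0, K1 * (1+s)^η :=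
        intervalIntegral.integral_mono_on (by norm_num) iF1 (ig1.const_mul K1) hb1
      _ = K1 * ∫ s in (-1:ℝ)..0, (1+s)^η := intervalIntegral.integral_const_mul _ _
      _ = K1 * (1/(η+1)) := by rw [E1]
    have hJ2 : (∫ s in (0:ℝ)..s0, F s) ≤ K2 * ((1 - u0^(η-γ+1))/(η-γ+1)) := by
      calc (∫ s in (0:ℝ)..s0, F s) ≤ ∫ s in (0:ℝ)..s0, K2 * (1-s)^(η-γ) :=
        intervalIntegral.integral_mono_on hs00 iF2 (ig2.const_mul K2) hb2
      _ = K2 * ∫ s in (0:ℝ)..s0, (1-s)^(η-γ) := intervalIntegral.integral_const_mul _ _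
      _ = K2 * ((1 - u0^(η-γ+1))/(η-γ+1)) := by rw [E2]
    have hJ3 : (∫ s in s0..(1:ℝ), F s) ≤ K3 * (u0^(η+1)/(η+1)) := by
      calc (∫ s in s0..(1:ℝ), F s) ≤ ∫ s in s0..(1:ℝ), K3 * (1-s)^η :=
        intervalIntegral.integral_mono_on hs01.le iF3 ((ig3 s0 1).const_mul K3) hb3
      _ = K3 * ∫ s in s0..(1:ℝ), (1-s)^η := intervalIntegral.integral_const_mul _ _
      _ = K3 * (u0^(η+1)/(η+1)) := by rw [E3]
    -- algebra
    have hAsplit : A ^ γ = A ^ (η+1) * A ^ (γ-η-1) := by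
      rw [← Real.rpow_add hA]; congr 1; ring
    have hABsplit : (A-B) ^ γ = (A-B) ^ (η+1) * (A-B) ^ (γ-η-1) := by
      rw [← Real.rpow_add hAB]; congr 1; ring
    have halg1 : K1 * (1/(η+1)) ≤ m * (η+1)⁻¹ * P⁻¹ := by
      have h' : (A-B)^(γ-η-1) ≤ A^(γ-η-1) := Real.rpow_le_rpow hAB.le (by linarith) (by linarith)
      have hPle : P ≤ (D-B) * A^γ := by
        calc P = (D-B) * A^(η+1) * (A-B)^(γ-η-1) := hPdef
        _ ≤ (D-B) * A^(η+1) * A^(γ-η-1) :=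
            mul_le_mul_of_nonneg_left h' (mul_nonneg hDB.le (Real.rpow_nonneg hA.le _))
        _ = (D-B) * A^γ := by rw [hAsplit]; ring
      have hinv : ((D-B) * A^γ)⁻¹ ≤ P⁻¹ := inv_anti₀ hP hPle
      calc K1 * (1/(η+1)) = (m * (η+1)⁻¹) * ((D-B) * A^γ)⁻¹ := by
            rw [hK1, div_eq_mul_inv, one_div]; ring
      _ ≤ (m * (η+1)⁻¹) * P⁻¹ :=
            mul_le_mul_of_nonneg_left hinv (mul_nonneg (by linarith) (inv_nonneg.2 hη.le))
    have hu0p : u0 ^ (η-γ+1) = (u0 ^ (γ-η-1))⁻¹ := by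
      rw [← Real.rpow_neg hu0pos.le]; congr 1; ring
    have halg2 : K2 * ((1 - u0^(η-γ+1))/(η-γ+1)) ≤ m * 2^γ * (γ-η-1)⁻¹ * P⁻¹ := by
      have hx1 : 1 ≤ u0 ^ (η-γ+1) :=
        Real.one_le_rpow_of_pos_of_le_one_of_nonpos hu0pos hu01 (by linarith)
      have hstep1 : (1 - u0^(η-γ+1))/(η-γ+1) ≤ u0^(η-γ+1)/(γ-η-1) := by
        have heq : (1 - u0^(η-γ+1))/(η-γ+1) = (u0^(η-γ+1) - 1)/(γ-η-1) := by
          rw [div_eq_div_iff (by linarith : η-γ+1 ≠ 0) (by linarith : γ-η-1 ≠ 0)]; ring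
        rw [heq]
        exact div_le_div₀ (by linarith) (by linarith) hge le_rfl
      have hK2nn : 0 ≤ K2 := by
        rw [hK2]
        exact div_nonneg (mul_nonneg (by linarith) (Real.rpow_nonneg (by norm_num) _))
          (mul_nonneg hDB.le (Real.rpow_nonneg hA.le _))
      refine (mul_le_mul_of_nonneg_left hstep1 hK2nn).trans ?_
      have hne : A^(γ-η-1) ≠ 0 := (Real.rpow_pos_of_pos hA (γ-η-1)).ne'
      have hPle2 : P ≤ (D-B) * A^γ * u0^(γ-η-1) := by
        have h1 : ((A-B)/A)^(γ-η-1) ≤ u0^(γ-η-1) :=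
          Real.rpow_le_rpow (div_nonneg hAB.le hA.le) hu0_ge (by linarith)
        have h2 : ((A-B)/A)^(γ-η-1) = (A-B)^(γ-η-1)/A^(γ-η-1) :=
          Real.div_rpow hAB.le hA.le _
        calc P = (D-B) * A^(η+1) * (A-B)^(γ-η-1) := hPdef
        _ = (D-B) * A^γ * ((A-B)^(γ-η-1)/A^(γ-η-1)) := by
            rw [hAsplit]; field_simp
        _ ≤ (D-B) * A^γ * u0^(γ-η-1) :=
            mul_le_mul_of_nonneg_left (h2 ▸ h1) (mul_nonneg hDB.le (Real.rpow_nonneg hA.le _))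
      have hinv2 : ((D-B) * A^γ * u0^(γ-η-1))⁻¹ ≤ P⁻¹ := inv_anti₀ hP hPle2
      calc K2 * (u0^(η-γ+1)/(γ-η-1)) = (m*2^γ*(γ-η-1)⁻¹) * ((D-B) * A^γ * u0^(γ-η-1))⁻¹ := by
            rw [hK2, hu0p]
            have n1 : ((D:ℝ)-B) ≠ 0 := hDB.ne'
            have n2 : A^γ ≠ 0 := (Real.rpow_pos_of_pos hA γ).ne'
            have n3 : u0^(γ-η-1) ≠ 0 := (Real.rpow_pos_of_pos hu0pos _).ne'
            have n4 : γ-η-1 ≠ 0 := hge.ne'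
            field_simp
      _ ≤ (m*2^γ*(γ-η-1)⁻¹) * P⁻¹ :=
            mul_le_mul_of_nonneg_left hinv2
              (mul_nonneg (mul_nonneg (by linarith) (Real.rpow_nonneg (by norm_num) _))
                (inv_nonneg.2 hge.le))
    have halg3 : K3 * (u0^(η+1)/(η+1)) ≤ m * 2^(η+1) * (η+1)⁻¹ * P⁻¹ := by
      have h1 : u0^(η+1) ≤ (2*(A-B)/A)^(η+1) :=
        Real.rpow_le_rpow hu0pos.le hu0_le (by linarith)
      have h2 : (2*(A-B)/A)^(η+1) = 2^(η+1)*(A-B)^(η+1)/A^(η+1) := by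
        rw [Real.div_rpow (by positivity) hA.le, Real.mul_rpow (by norm_num) hAB.le]
      have hK3nn : 0 ≤ K3 := by
        rw [hK3]
        exact div_nonneg (by linarith) (mul_nonneg hDB.le (Real.rpow_nonneg hAB.le _))
      calc K3 * (u0^(η+1)/(η+1)) ≤ K3 * ((2^(η+1)*(A-B)^(η+1)/A^(η+1))/(η+1)) := by
            apply mul_le_mul_of_nonneg_left _ hK3nn
            exact div_le_div₀ (by positivity) (h2 ▸ h1) hη le_rfl
      _ = (m * 2^(η+1) * (η+1)⁻¹) * ((D - B) * A ^ (η + 1) * (A - B) ^ (γ - η - 1))⁻¹ := by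
            rw [hK3, hABsplit]
            have n1 : A^(η+1) ≠ 0 := (Real.rpow_pos_of_pos hA _).ne'
            have n2 : (A-B)^(η+1) ≠ 0 := (Real.rpow_pos_of_pos hAB _).ne'
            have n3 : (A-B)^(γ-η-1) ≠ 0 := (Real.rpow_pos_of_pos hAB _).ne'
            have n5 : ((2:ℝ))^(η+1) ≠ 0 := (Real.rpow_pos_of_pos two_pos _).ne'
            field_simp
      _ = (m * 2^(η+1) * (η+1)⁻¹) * P⁻¹ := by rw [← hPdef]
    -- convert goal to interval integral
    have hIoo : (∫ s in Set.Ioo (-1:ℝ) 1, F s) = ∫ s in (-1:ℝ)..1, F s := by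
      rw [intervalIntegral.integral_of_le (by norm_num : (-1:ℝ) ≤ 1),
        MeasureTheory.integral_Ioc_eq_integral_Ioo]
    rw [hIoo]
    constructor
    · -- lower bound
      set σ : ℝ := min 1 ((A-B)/(2*B)) with hσdef
      clear_value σ
      have hσ0 : 0 < σ := by rw [hσdef]; exact lt_min one_pos (by positivity)
      have hσ1 : σ ≤ 1 := by rw [hσdef]; exact min_le_left _ _
      have hBσ : B * σ ≤ (A-B)/2 := by
        have h := min_le_right 1 ((A-B)/(2*B))
        rw [← hσdef] at h
        calc B * σ ≤ B * ((A-B)/(2*B)) := mul_le_mul_of_nonneg_left h hB.le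
        _ = (A-B)/2 := by field_simp
      have hσA : (A-B)/(2*A) ≤ σ := by
        rw [hσdef]
        refine le_min ?_ (div_le_div_of_nonneg_left hAB.le (by positivity) (by linarith))
        rw [div_le_one (by positivity)]; linarith
      set KL : ℝ := m' / ((3/2*(D-B)) * ((3/2)*(A-B))^γ) with hKL
      clear_value KL
      have hKLpos : 0 < KL := by
        rw [hKL]
        exact div_pos hm'0 (mul_pos (by linarith) (Real.rpow_pos_of_pos (by linarith) γ))
      have hblow : ∀ s ∈ Icc (1-σ) (1:ℝ), KL * (1-s)^η ≤ F s := by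
        intro s hs
        have hs0' : (0:ℝ) ≤ s := by linarith [hs.1, hσ1]
        have hsI : s ∈ Icc (-1:ℝ) 1 := ⟨by linarith, hs.2⟩
        obtain ⟨hDs, hAs⟩ := hIcc s hsI
        have hnum : m' * (1-s)^η ≤ (1 - s^2)^η := by rw [hm']; exact fb_num_lb η hs0' hs.2
        have hBs : B * (1-s) ≤ (A-B)/2 := by
          have h1 : 1 - s ≤ σ := by linarith [hs.1]
          calc B * (1-s) ≤ B * σ := mul_le_mul_of_nonneg_left h1 hB.le
          _ ≤ (A-B)/2 := hBσ
        have hexp : B * (1-s) = B - B*s := by ring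
        have hden : (D - B*s) * (A - B*s)^γ ≤ (3/2*(D-B)) * ((3/2)*(A-B))^γ := by
          have hd1 : D - B*s ≤ 3/2*(D-B) := by linarith [hBs, hABD, hexp]
          have hd2 : A - B*s ≤ 3/2*(A-B) := by linarith [hBs, hexp]
          exact mul_le_mul hd1 (Real.rpow_le_rpow hAs.le hd2 hγ0.le)
            (Real.rpow_nonneg hAs.le _) (by linarith)
        calc KL * (1-s)^η = m' * (1-s)^η / ((3/2*(D-B)) * ((3/2)*(A-B))^γ) := by rw [hKL]; ring
        _ ≤ (1 - s^2)^η / ((D - B*s) * (A - B*s)^γ) :=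
            div_le_div₀ (Real.rpow_nonneg (fb_sq hsI.1 hsI.2) η) hnum
              (mul_pos hDs (Real.rpow_pos_of_pos hAs γ)) hden
        _ = F s := by simp only [hFdef]
      have iFlow : IntervalIntegrable F volume (1-σ) 1 := by
        apply iFfull.mono_set
        rw [Set.uIcc_of_le (by linarith : 1-σ ≤ (1:ℝ)), Set.uIcc_of_le (by norm_num : (-1:ℝ) ≤ 1)]
        exact Set.Icc_subset_Icc (by linarith) le_rfl
      have iFleft : IntervalIntegrable F volume (-1) (1-σ) := by
        apply iFfull.mono_set
        rw [Set.uIcc_of_le (by linarith : (-1:ℝ) ≤ 1-σ), Set.uIcc_of_le (by norm_num : (-1:ℝ) ≤ 1)]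
        exact Set.Icc_subset_Icc le_rfl (by linarith)
      have Elow : (∫ s in (1-σ)..(1:ℝ), (1-s)^η) = σ^(η+1)/(η+1) := by
        rw [E3gen (1-σ)]
        norm_num
      have hlow1 : KL * (σ^(η+1)/(η+1)) ≤ ∫ s in (1-σ)..(1:ℝ), F s := by
        calc KL * (σ^(η+1)/(η+1)) = KL * ∫ s in (1-σ)..(1:ℝ), (1-s)^η := by rw [Elow]
        _ = ∫ s in (1-σ)..(1:ℝ), KL * (1-s)^η := (intervalIntegral.integral_const_mul _ _).symm
        _ ≤ ∫ s in (1-σ)..(1:ℝ), F s :=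
            intervalIntegral.integral_mono_on (by linarith) ((ig3 _ _).const_mul KL) iFlow hblow
      have hnn : 0 ≤ ∫ s in (-1:ℝ)..(1-σ), F s :=
        intervalIntegral.integral_nonneg (by linarith)
          (fun u hu => hF0 u ⟨hu.1, by linarith [hu.2]⟩)
      have htot : KL * (σ^(η+1)/(η+1)) ≤ ∫ s in (-1:ℝ)..1, F s := by
        rw [← intervalIntegral.integral_add_adjacent_intervals iFleft iFlow]
        linarith
      refine le_trans ?_ htot
      have h1 : ((A-B)/(2*A))^(η+1) ≤ σ^(η+1) := Real.rpow_le_rpow (by positivity) hσA (by linarith)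
      have h2 : ((A-B)/(2*A))^(η+1) = (A-B)^(η+1)/((2:ℝ)^(η+1)*A^(η+1)) := by
        rw [Real.div_rpow hAB.le (by positivity), Real.mul_rpow (by norm_num) hA.le]
      have h3 : ((3/2:ℝ)*(A-B))^γ = (3/2:ℝ)^γ * ((A-B)^(η+1) * (A-B)^(γ-η-1)) := by
        rw [Real.mul_rpow (by norm_num) hAB.le, hABsplit]
      have h23 : ((2:ℝ)/3)^(γ+1) = ((3/2:ℝ)^γ * (3/2))⁻¹ := by
        rw [show ((2:ℝ)/3) = ((3:ℝ)/2)⁻¹ by norm_num, Real.inv_rpow (by norm_num),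
          Real.rpow_add (by norm_num) γ 1, Real.rpow_one]
      calc m' * (2/3)^(γ+1) / ((2:ℝ)^(η+1) * (η+1)) * P⁻¹
          = KL * (((A-B)^(η+1)/((2:ℝ)^(η+1)*A^(η+1)))/(η+1)) := by
            rw [hKL, hPdef, h3, h23]
            have n1 : A^(η+1) ≠ 0 := (Real.rpow_pos_of_pos hA _).ne'
            have n2 : (A-B)^(η+1) ≠ 0 := (Real.rpow_pos_of_pos hAB _).ne'
            have n3 : (A-B)^(γ-η-1) ≠ 0 := (Real.rpow_pos_of_pos hAB _).ne'
            have n4 : ((3:ℝ)/2)^γ ≠ 0 :=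
              (Real.rpow_pos_of_pos (show (0:ℝ) < 3/2 by norm_num) γ).ne'
            have n5 : ((2:ℝ))^(η+1) ≠ 0 := (Real.rpow_pos_of_pos two_pos _).ne'
            have n6 : D - B ≠ 0 := hDB.ne'
            have n7 : η + 1 ≠ 0 := hη.ne'
            field_simp
      _ ≤ KL * ((σ^(η+1))/(η+1)) := by
            apply mul_le_mul_of_nonneg_left _ hKLpos.le
            exact div_le_div₀ (Real.rpow_nonneg hσ0.le _) (h2 ▸ h1) hη le_rfl
      _ = KL * (σ^(η+1)/(η+1)) := rfl
    · -- upper bound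
      rw [hsplit]
      refine le_trans (add_le_add (add_le_add hJ1 hJ2) hJ3) ?_
      refine le_trans (add_le_add (add_le_add halg1 halg2) halg3) (le_of_eq ?_)
      ring
end

section
/- Let d ≥ 1 and let x, y, t, c > 0. Set ν = d/2 − 1 and let 𝚡 = (x, 0, …, 0) ∈ ℝ^d. Then ∫_{S^{d−1}} exp(−|𝚡 − yξ|²/(ct)) dσ(ξ) = (2π)^{ν+1} exp(−(x²+y²)/(ct)) · (ct/(2xy))^{ν} · I_ν(2xy/(ct)), where I_ν is the modified Bessel function of the first kind of order ν. -/
open MeasureTheory Real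

/-- Modified Bessel function of the first kind of order `ν`. -/
noncomputable def besselI (ν x : ℝ) : ℝ :=
  ∑' k : ℕ, (x / 2) ^ (2 * (k : ℝ) + ν) / (k.factorial * Real.Gamma (k + ν + 1))

open Measure Metric Set

set_option maxHeartbeats 1000000

variable {d : ℕ}

lemma integral_polar {E : Type*} [NormedAddCommGroup E] [NormedSpace ℝ E] [MeasurableSpace E]
    [BorelSpace E] [FiniteDimensional ℝ E] [Nontrivial E] (μ : Measure E) [μ.IsAddHaarMeasure]
    (f : E → ℝ) (hf : Integrable f μ) :
    ∫ z, f z ∂μ = ∫ ξ : sphere (0:E) 1, ∫ r in Ioi (0:ℝ),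
      r ^ (Module.finrank ℝ E - 1) * f (r • (ξ:E)) ∂volume ∂μ.toSphere := by
  set n := Module.finrank ℝ E - 1 with hn
  set F : sphere (0:E) 1 × Ioi (0:ℝ) → ℝ := fun p => f ((p.2 : ℝ) • (p.1 : E)) with hF
  have emb := MeasurableEmbedding.subtype_coe (measurableSet_singleton (0:E)).compl
  have hcomp : (F ∘ (homeomorphUnitSphereProd E)) = fun z : ({0}ᶜ : Set E) => f z := by
    funext z
    simp only [Function.comp_apply, hF, homeomorphUnitSphereProd_apply_snd_coe,
      homeomorphUnitSphereProd_apply_fst_coe]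
    rw [smul_inv_smul₀ (norm_ne_zero_iff.2 z.2)]
  have hfc : Integrable (fun z : ({0}ᶜ : Set E) => f z) (μ.comap Subtype.val) := by
    rw [show (fun z : ({0}ᶜ : Set E) => f z) = f ∘ Subtype.val from rfl,
      ← emb.integrable_map_iff, emb.map_comap, Subtype.range_coe, restrict_compl_singleton]
    exact hf
  have hFint : Integrable F (μ.toSphere.prod (volumeIoiPow n)) := by
    rw [← (μ.measurePreserving_homeomorphUnitSphereProd).integrable_comp_emb
      (Homeomorph.measurableEmbedding _), hcomp]
    exact hfc
  calc ∫ z, f z ∂μ = ∫ z : ({0}ᶜ : Set E), f z ∂(μ.comap Subtype.val) := by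
        rw [integral_subtype_comap (measurableSet_singleton _).compl, restrict_compl_singleton]
    _ = ∫ p, F p ∂(μ.toSphere.prod (volumeIoiPow n)) := by
        rw [← μ.measurePreserving_homeomorphUnitSphereProd.integral_comp
          (Homeomorph.measurableEmbedding _) F]
        exact integral_congr_ae (Filter.Eventually.of_forall fun z => (congrFun hcomp z).symm)
    _ = ∫ ξ : sphere (0:E) 1, ∫ r : Ioi (0:ℝ), F (ξ, r) ∂(volumeIoiPow n) ∂μ.toSphere :=
        integral_prod F hFint
    _ = _ := by
        refine integral_congr_ae (Filter.Eventually.of_forall fun ξ => ?_)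
        show ∫ r : Ioi (0:ℝ), F (ξ, r) ∂(volumeIoiPow n) = _
        simp only [Measure.volumeIoiPow, ENNReal.ofReal]
        rw [integral_withDensity_eq_integral_smul
          ((measurable_subtype_coe.pow_const _).real_toNNReal) (fun r => F (ξ, r)),
          integral_subtype_comap measurableSet_Ioi
            (fun a : ℝ => Real.toNNReal (a ^ n) • f (a • (ξ : E)))]
        refine setIntegral_congr_fun measurableSet_Ioi fun a ha => ?_
        rw [NNReal.smul_def, Real.coe_toNNReal _ (pow_nonneg (le_of_lt ha) _), smul_eq_mul]

lemma integrable_pow_mul_exp_neg_sq (n : ℕ) :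
    Integrable fun w : ℝ => w ^ n * rexp (-w ^ 2) := by
  have := integrable_rpow_mul_exp_neg_mul_sq (b := 1) one_pos
    (s := (n : ℝ)) (by exact_mod_cast lt_of_lt_of_le neg_one_lt_zero (Nat.cast_nonneg n))
  simpa [Real.rpow_natCast] using this

lemma integral_Ioi_pow_mul_exp_neg_sq (m : ℕ) :
    ∫ r in Ioi (0:ℝ), r ^ m * rexp (-r ^ 2) = Real.Gamma (((m : ℝ) + 1) / 2) / 2 := by
  have h := integral_rpow_mul_exp_neg_rpow (p := 2) (q := (m : ℝ)) two_pos
    (by exact_mod_cast lt_of_lt_of_le neg_one_lt_zero (Nat.cast_nonneg m))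
  rw [show ∫ r in Ioi (0:ℝ), r ^ m * rexp (-r ^ 2)
      = ∫ r in Ioi (0:ℝ), r ^ (m : ℝ) * rexp (-r ^ (2:ℝ)) from
    setIntegral_congr_fun measurableSet_Ioi fun r _ => by
      rw [Real.rpow_natCast, show ((2:ℝ)) = ((2:ℕ):ℝ) by norm_num, Real.rpow_natCast], h]
  ring

lemma integral_pow_mul_exp_neg_sq_even (k : ℕ) :
    ∫ r : ℝ, r ^ (2 * k) * rexp (-r ^ 2) = Real.Gamma ((k : ℝ) + 1 / 2) := by
  have heq : (fun r : ℝ => r ^ (2 * k) * rexp (-r ^ 2))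
      = fun r : ℝ => |r| ^ (2 * k) * rexp (-|r| ^ 2) := by
    funext r
    rw [sq_abs, pow_mul, pow_mul, sq_abs]
  rw [heq, integral_comp_abs (f := fun r : ℝ => r ^ (2 * k) * rexp (-r ^ 2)),
    integral_Ioi_pow_mul_exp_neg_sq]
  push_cast
  rw [show ((2:ℝ) * k + 1) / 2 = (k : ℝ) + 1 / 2 by ring]
  ring

lemma integral_pow_mul_exp_neg_sq_odd (k : ℕ) :
    ∫ r : ℝ, r ^ (2 * k + 1) * rexp (-r ^ 2) = 0 := by
  have h := integral_neg_eq_self (fun r : ℝ => r ^ (2 * k + 1) * rexp (-r ^ 2)) volume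
  simp only [neg_sq, Odd.neg_pow (odd_two_mul_add_one k), neg_mul] at h
  rw [MeasureTheory.integral_neg] at h
  linarith

lemma Gamma_nat_add_half (k : ℕ) :
    Real.Gamma ((k : ℝ) + 1 / 2) = (2 * k).factorial * √π / (4 ^ k * k.factorial) := by
  induction k with
  | zero =>
    simp only [Nat.cast_zero, zero_add, mul_zero, Nat.factorial_zero, pow_zero,
      Nat.cast_one, one_mul, mul_one]
    rw [Real.Gamma_one_half_eq]
    simp
  | succ k ih =>
    have h : ((k : ℝ) + 1 / 2) ≠ 0 := by positivity
    have : ((k + 1 : ℕ) : ℝ) + 1 / 2 = ((k : ℝ) + 1 / 2) + 1 := by push_cast; ring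
    rw [this, Real.Gamma_add_one h, ih]
    have h4 : (4 : ℝ) ^ (k + 1) = 4 * 4 ^ k := by ring
    have hf1 : ((k + 1).factorial : ℝ) = (k + 1) * k.factorial := by
      rw [Nat.factorial_succ]; push_cast; ring
    have hf2 : ((2 * (k + 1)).factorial : ℝ)
        = (2 * k + 2) * (2 * k + 1) * (2 * k).factorial := by
      rw [show 2 * (k + 1) = (2 * k + 1) + 1 by ring, Nat.factorial_succ, Nat.factorial_succ]
      push_cast; ring
    rw [h4, hf1, hf2]
    field_simp
    ring

variable {d : ℕ}

private noncomputable def gfun (i₀ : Fin d) (n : ℕ) : Fin d → ℝ → ℝ := fun i w =>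
  if i = i₀ then w ^ n * rexp (-w ^ 2) else rexp (-w ^ 2)

lemma pi_aux (i₀ : Fin d) (n : ℕ) (z : Fin d → ℝ) :
    (z i₀) ^ n * rexp (-∑ i, (z i) ^ 2) = ∏ i, gfun i₀ n i (z i) := by
  have hexp : rexp (-∑ i, (z i) ^ 2) = ∏ i, rexp (-(z i) ^ 2) := by
    rw [← Real.exp_sum]
    congr 1
    rw [← Finset.sum_neg_distrib]
  rw [hexp, ← Finset.mul_prod_erase Finset.univ (fun i => gfun i₀ n i (z i))
      (Finset.mem_univ i₀),
    ← Finset.mul_prod_erase Finset.univ (fun i => rexp (-(z i) ^ 2)) (Finset.mem_univ i₀)]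
  have h1 : gfun i₀ n i₀ (z i₀) = (z i₀) ^ n * rexp (-(z i₀) ^ 2) := if_pos rfl
  have h2 : ∀ i ∈ Finset.univ.erase i₀, gfun i₀ n i (z i) = rexp (-(z i) ^ 2) := by
    intro i hi
    exact if_neg (Finset.ne_of_mem_erase hi)
  rw [h1, Finset.prod_congr rfl h2]
  ring

lemma norm_sq_eq_sum' (z : EuclideanSpace ℝ (Fin d)) : ‖z‖ ^ 2 = ∑ i, (z i) ^ 2 := by
  rw [EuclideanSpace.norm_eq, Real.sq_sqrt (by positivity)]
  simp [sq_abs]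

lemma integral_gauss1 : ∫ w : ℝ, rexp (-w ^ 2) = √π := by
  simpa using integral_gaussian 1

lemma integrable_gfun (i₀ : Fin d) (n : ℕ) (i : Fin d) : Integrable (gfun i₀ n i) := by
  have h0 := integrable_rpow_mul_exp_neg_mul_sq (b := 1) one_pos (s := (0 : ℝ)) (by norm_num)
  have hn : Integrable fun w : ℝ => w ^ n * rexp (-w ^ 2) := by
    have := integrable_rpow_mul_exp_neg_mul_sq (b := 1) one_pos
      (s := (n : ℝ)) (by exact_mod_cast lt_of_lt_of_le neg_one_lt_zero (Nat.cast_nonneg n))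
    simpa [Real.rpow_natCast] using this
  unfold gfun
  by_cases h : i = i₀
  · simp only [if_pos h]; exact hn
  · simp only [if_neg h]
    simpa using integrable_rpow_mul_exp_neg_mul_sq (b := 1) one_pos (s := (0:ℝ)) (by norm_num)

lemma integrable_coord_pow_gaussian (i₀ : Fin d) (n : ℕ) :
    Integrable (fun z : EuclideanSpace ℝ (Fin d) => (z i₀) ^ n * rexp (-‖z‖ ^ 2)) := by
  have hmp := (EuclideanSpace.volume_preserving_symm_measurableEquiv_toLp (Fin d)).symm
  rw [← hmp.integrable_comp_emb (MeasurableEquiv.measurableEmbedding _)]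
  have : ((fun z : EuclideanSpace ℝ (Fin d) => (z i₀) ^ n * rexp (-‖z‖ ^ 2)) ∘
      (MeasurableEquiv.toLp 2 (Fin d → ℝ)).symm.symm)
      = fun z : Fin d → ℝ => ∏ i, gfun i₀ n i (z i) := by
    funext z
    simp only [Function.comp_apply]
    rw [norm_sq_eq_sum', ← pi_aux]
    rfl
  rw [this]
  exact Integrable.fintype_prod (fun i => integrable_gfun i₀ n i)

lemma integral_coord_pow_gaussian (i₀ : Fin d) (n : ℕ) :
    ∫ z : EuclideanSpace ℝ (Fin d), (z i₀) ^ n * rexp (-‖z‖ ^ 2)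
      = (∫ w : ℝ, w ^ n * rexp (-w ^ 2)) * √π ^ (d - 1) := by
  have hmp := (EuclideanSpace.volume_preserving_symm_measurableEquiv_toLp (Fin d)).symm
  rw [← hmp.integral_comp'
    (fun z : EuclideanSpace ℝ (Fin d) => (z i₀) ^ n * rexp (-‖z‖ ^ 2))]
  have : ∀ z : Fin d → ℝ,
      (((MeasurableEquiv.toLp 2 (Fin d → ℝ)).symm.symm z) i₀) ^ n *
        rexp (-‖(MeasurableEquiv.toLp 2 (Fin d → ℝ)).symm.symm z‖ ^ 2)
      = ∏ i, gfun i₀ n i (z i) := by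
    intro z
    rw [norm_sq_eq_sum', ← pi_aux]
    rfl
  rw [integral_congr_ae (Filter.Eventually.of_forall this),
    MeasureTheory.integral_fintype_prod_volume_eq_prod (f := gfun i₀ n),
    ← Finset.mul_prod_erase Finset.univ (fun i => ∫ w, gfun i₀ n i w) (Finset.mem_univ i₀)]
  have h1 : (∫ w, gfun i₀ n i₀ w) = ∫ w : ℝ, w ^ n * rexp (-w ^ 2) := by
    unfold gfun; simp
  have h2 : ∀ i ∈ Finset.univ.erase i₀, (∫ w, gfun i₀ n i w) = √π := by
    intro i hi
    unfold gfun
    simp only [if_neg (Finset.ne_of_mem_erase hi)]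
    exact integral_gauss1
  rw [h1, Finset.prod_congr rfl h2, Finset.prod_const, Finset.card_erase_of_mem
    (Finset.mem_univ i₀), Finset.card_univ, Fintype.card_fin]

lemma sphere_moment (hd : 0 < d) (i₀ : Fin d) (n : ℕ) :
    ∫ ξ : sphere (0 : EuclideanSpace ℝ (Fin d)) 1,
      ((ξ : EuclideanSpace ℝ (Fin d)) i₀) ^ n
      ∂(volume : Measure (EuclideanSpace ℝ (Fin d))).toSphere
    = (∫ w : ℝ, w ^ n * rexp (-w ^ 2)) * √π ^ (d - 1) * 2
        / Real.Gamma (((n : ℝ) + d) / 2) := by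
  haveI : Nontrivial (EuclideanSpace ℝ (Fin d)) := by
    refine ⟨EuclideanSpace.single i₀ (1:ℝ), 0, fun h => ?_⟩
    have := EuclideanSpace.norm_single (𝕜 := ℝ) i₀ 1
    rw [h] at this
    simp at this
  have hpolar := integral_polar (volume : Measure (EuclideanSpace ℝ (Fin d)))
    (fun z => (z i₀) ^ n * rexp (-‖z‖ ^ 2)) (integrable_coord_pow_gaussian i₀ n)
  rw [integral_coord_pow_gaussian i₀ n] at hpolar
  have hrank : Module.finrank ℝ (EuclideanSpace ℝ (Fin d)) = d := finrank_euclideanSpace_fin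
  rw [hrank] at hpolar
  have hinner : ∀ ξ : sphere (0 : EuclideanSpace ℝ (Fin d)) 1,
      (∫ r in Ioi (0:ℝ), r ^ (d - 1) *
        (((r • (ξ : EuclideanSpace ℝ (Fin d))) i₀) ^ n *
          rexp (-‖r • (ξ : EuclideanSpace ℝ (Fin d))‖ ^ 2)))
      = ((ξ : EuclideanSpace ℝ (Fin d)) i₀) ^ n * (Real.Gamma (((n : ℝ) + d) / 2) / 2) := by
    intro ξ
    have hξ : ‖(ξ : EuclideanSpace ℝ (Fin d))‖ = 1 := mem_sphere_zero_iff_norm.mp ξ.2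
    have : ∀ r ∈ Ioi (0:ℝ), r ^ (d - 1) *
        (((r • (ξ : EuclideanSpace ℝ (Fin d))) i₀) ^ n *
          rexp (-‖r • (ξ : EuclideanSpace ℝ (Fin d))‖ ^ 2))
        = ((ξ : EuclideanSpace ℝ (Fin d)) i₀) ^ n * (r ^ (d - 1 + n) * rexp (-r ^ 2)) := by
      intro r hr
      have h1 : (r • (ξ : EuclideanSpace ℝ (Fin d))) i₀
          = r * (ξ : EuclideanSpace ℝ (Fin d)) i₀ := rfl
      have h2 : ‖r • (ξ : EuclideanSpace ℝ (Fin d))‖ = r := by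
        rw [norm_smul, hξ, mul_one, Real.norm_eq_abs, abs_of_pos hr]
      rw [h1, h2, mul_pow, pow_add]
      ring
    rw [setIntegral_congr_fun measurableSet_Ioi this, integral_const_mul,
      integral_Ioi_pow_mul_exp_neg_sq]
    congr 2
    have : d - 1 + n + 1 = n + d := by omega
    rw [show ((d - 1 + n : ℕ) : ℝ) + 1 = (((d - 1 + n + 1 : ℕ)) : ℝ) by push_cast; ring, this]
    push_cast
    ring
  rw [integral_congr_ae (Filter.Eventually.of_forall hinner), integral_mul_const] at hpolar
  have hΓ : Real.Gamma (((n : ℝ) + d) / 2) ≠ 0 := by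
    have : (0:ℝ) < ((n : ℝ) + d) / 2 := by
      have : (0:ℝ) < (d:ℝ) := by exact_mod_cast hd
      positivity
    exact (Real.Gamma_pos_of_pos this).ne'
  field_simp at hpolar ⊢
  linarith [hpolar]

lemma abs_coord_le_one (ξ : sphere (0 : EuclideanSpace ℝ (Fin d)) 1) (i : Fin d) :
    |(ξ : EuclideanSpace ℝ (Fin d)) i| ≤ 1 := by
  have hξ : ‖(ξ : EuclideanSpace ℝ (Fin d))‖ = 1 := mem_sphere_zero_iff_norm.mp ξ.2
  calc |(ξ : EuclideanSpace ℝ (Fin d)) i| ≤ ‖(ξ : EuclideanSpace ℝ (Fin d))‖ := by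
        rw [EuclideanSpace.norm_eq, ← Real.sqrt_sq_eq_abs]
        apply Real.sqrt_le_sqrt
        have := Finset.single_le_sum
          (f := fun j => ‖(ξ : EuclideanSpace ℝ (Fin d)) j‖ ^ 2)
          (fun j _ => by positivity) (Finset.mem_univ i)
        simpa [sq_abs] using this
    _ = 1 := hξ

lemma continuous_coord (i : Fin d) :
    Continuous fun z : EuclideanSpace ℝ (Fin d) => z i :=
  (EuclideanSpace.proj (𝕜 := ℝ) (ι := Fin d) i).continuous

lemma sqrt_pi_pow (m : ℕ) : (√π) ^ m = π ^ ((m : ℝ) / 2) := by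
  rw [Real.sqrt_eq_rpow, ← Real.rpow_natCast (π ^ ((1:ℝ)/2)) m,
    ← Real.rpow_mul (le_of_lt pi_pos)]
  congr 1
  push_cast
  ring

lemma sphere_exp_integral (hd : 0 < d) (i₀ : Fin d) {a : ℝ} (ha : 0 < a) :
    ∫ ξ : sphere (0 : EuclideanSpace ℝ (Fin d)) 1,
      rexp (a * ((ξ : EuclideanSpace ℝ (Fin d)) i₀))
      ∂(volume : Measure (EuclideanSpace ℝ (Fin d))).toSphere
    = 2 * π ^ ((d : ℝ) / 2) *
        ∑' k : ℕ, (a / 2) ^ (2 * k) / (k.factorial * Real.Gamma (k + (d : ℝ) / 2)) := by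
  set σ := (volume : Measure (EuclideanSpace ℝ (Fin d))).toSphere with hσ
  set u : sphere (0 : EuclideanSpace ℝ (Fin d)) 1 → ℝ :=
    fun ξ => (ξ : EuclideanSpace ℝ (Fin d)) i₀ with hu
  have hum : Measurable u :=
    (continuous_coord i₀).measurable.comp measurable_subtype_coe
  have hub : ∀ ξ, |u ξ| ≤ 1 := fun ξ => abs_coord_le_one ξ i₀
  set f : ℕ → sphere (0 : EuclideanSpace ℝ (Fin d)) 1 → ℝ :=
    fun m ξ => (a * u ξ) ^ m / m.factorial with hf
  have hpt : ∀ ξ, rexp (a * u ξ) = ∑' m, f m ξ := by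
    intro ξ
    rw [Real.exp_eq_exp_ℝ, NormedSpace.exp_eq_tsum_div]
  have hmeas : ∀ m, AEStronglyMeasurable (f m) σ := fun m =>
    (((hum.const_mul a).pow_const m).div_const _).aestronglyMeasurable
  have hbound : ∀ m ξ, ‖f m ξ‖ ≤ a ^ m / m.factorial := by
    intro m ξ
    have h1 : |a * u ξ| ≤ a := by
      rw [abs_mul, abs_of_pos ha]
      calc a * |u ξ| ≤ a * 1 := by gcongr; exact hub ξ
        _ = a := mul_one a
    rw [hf]
    simp only [Real.norm_eq_abs, abs_div, abs_pow, Nat.abs_cast]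
    gcongr
    all_goals first
      | exact abs_nonneg _
      | exact h1
  have hlint : ∀ m, ∫⁻ ξ, ‖f m ξ‖₊ ∂σ ≤ ENNReal.ofReal (a ^ m / m.factorial) * σ univ := by
    intro m
    calc ∫⁻ ξ, ‖f m ξ‖₊ ∂σ ≤ ∫⁻ _, ENNReal.ofReal (a ^ m / m.factorial) ∂σ := by
          apply lintegral_mono
          intro ξ
          show (↑‖f m ξ‖₊ : ENNReal) ≤ ENNReal.ofReal (a ^ m / m.factorial)
          rw [← enorm_eq_nnnorm, ← ofReal_norm_eq_enorm]
          exact ENNReal.ofReal_le_ofReal (hbound m ξ)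
      _ = ENNReal.ofReal (a ^ m / m.factorial) * σ univ := lintegral_const _
  have htsum_ne : (∑' m, ∫⁻ ξ, ‖f m ξ‖₊ ∂σ) ≠ ⊤ := by
    apply ne_top_of_le_ne_top ?_ (ENNReal.tsum_le_tsum hlint)
    rw [ENNReal.tsum_mul_right, ← ENNReal.ofReal_tsum_of_nonneg
      (fun m => by positivity) (Real.summable_pow_div_factorial a)]
    exact ENNReal.mul_ne_top ENNReal.ofReal_ne_top (measure_ne_top σ univ)
  have hswap : ∫ ξ, rexp (a * u ξ) ∂σ = ∑' m, ∫ ξ, f m ξ ∂σ := by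
    rw [integral_congr_ae (Filter.Eventually.of_forall hpt)]
    exact integral_tsum hmeas htsum_ne
  set M : ℕ → ℝ := fun m => ∫ ξ, (u ξ) ^ m ∂σ with hM
  have hterm : ∀ m, ∫ ξ, f m ξ ∂σ = a ^ m / m.factorial * M m := by
    intro m
    rw [hM, ← integral_const_mul]
    apply integral_congr_ae (Filter.Eventually.of_forall fun ξ => ?_)
    rw [hf]
    simp only [mul_pow]
    ring
  have hMbound : ∀ m, ‖M m‖ ≤ (σ univ).toReal := by
    intro m
    have := norm_integral_le_of_norm_le_const (μ := σ) (C := 1)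
      (f := fun ξ => (u ξ) ^ m) (Filter.Eventually.of_forall fun ξ => by
        rw [norm_pow, Real.norm_eq_abs]
        exact pow_le_one₀ (abs_nonneg _) (hub ξ))
    simpa [measureReal_def] using this
  set g : ℕ → ℝ := fun m => a ^ m / m.factorial * M m with hg
  have habs : Summable (fun m => |g m|) := by
    refine Summable.of_nonneg_of_le (fun m => abs_nonneg _) (fun m => ?_)
      ((Real.summable_pow_div_factorial a).mul_right ((σ univ).toReal))
    rw [hg]
    simp only
    rw [abs_mul, abs_of_nonneg (by positivity : (0:ℝ) ≤ a ^ m / m.factorial)]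
    exact mul_le_mul_of_nonneg_left (hMbound m) (by positivity)
  have hgsum : Summable g := habs.of_abs
  have heven : Summable fun k => g (2 * k) :=
    hgsum.comp_injective (fun k₁ k₂ h => by omega)
  have hodd : Summable fun k => g (2 * k + 1) :=
    hgsum.comp_injective (fun k₁ k₂ h => by omega)
  have hoddzero : ∀ k, g (2 * k + 1) = 0 := by
    intro k
    rw [hg, hM]
    simp only
    rw [show (∫ ξ, (u ξ) ^ (2 * k + 1) ∂σ)
        = (∫ w : ℝ, w ^ (2*k+1) * rexp (-w ^ 2)) * √π ^ (d - 1) * 2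
          / Real.Gamma ((((2*k+1 : ℕ) : ℝ) + d) / 2) from sphere_moment hd i₀ (2*k+1),
      integral_pow_mul_exp_neg_sq_odd k]
    simp
  have hsplit : (∑' m, g m) = ∑' k, g (2 * k) := by
    rw [← tsum_even_add_odd heven hodd]
    simp [hoddzero]
  have hGpos : ∀ k : ℕ, 0 < Real.Gamma ((k : ℝ) + (d : ℝ) / 2) := by
    intro k
    apply Real.Gamma_pos_of_pos
    have : (0:ℝ) < (d:ℝ) := by exact_mod_cast hd
    positivity
  have hevenval : ∀ k, g (2 * k) = 2 * π ^ ((d : ℝ) / 2) *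
      ((a / 2) ^ (2 * k) / (k.factorial * Real.Gamma (k + (d : ℝ) / 2))) := by
    intro k
    rw [hg, hM]
    simp only
    rw [show (∫ ξ, (u ξ) ^ (2 * k) ∂σ)
        = (∫ w : ℝ, w ^ (2*k) * rexp (-w ^ 2)) * √π ^ (d - 1) * 2
          / Real.Gamma ((((2*k : ℕ) : ℝ) + d) / 2) from sphere_moment hd i₀ (2*k),
      integral_pow_mul_exp_neg_sq_even k, _root_.Gamma_nat_add_half k,
      show ((((2*k : ℕ) : ℝ)) + d) / 2 = (k : ℝ) + (d : ℝ) / 2 by push_cast; ring]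
    have hsp : (√π) ^ (d - 1) * √π = π ^ ((d : ℝ) / 2) := by
      rw [← pow_succ, Nat.sub_add_cancel hd, sqrt_pi_pow]
    have h4 : ((a : ℝ) / 2) ^ (2 * k) = a ^ (2 * k) / 4 ^ k := by
      rw [div_pow, pow_mul, pow_mul]
      norm_num
    have hfac : ((2 * k).factorial : ℝ) ≠ 0 := Nat.cast_ne_zero.mpr (2*k).factorial_ne_zero
    have hkfac : ((k).factorial : ℝ) ≠ 0 := Nat.cast_ne_zero.mpr k.factorial_ne_zero
    have h4k : ((4:ℝ)) ^ k ≠ 0 := by positivity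
    have hΓ := (hGpos k).ne'
    rw [h4, ← hsp]
    field_simp
  rw [hσ] at hswap ⊢
  rw [hswap, tsum_congr hterm, hsplit, tsum_congr hevenval, tsum_mul_left]

/-- **Lemma 3.5 (Nowak–Roncal):** for `d ≥ 1`, `ν = d/2 - 1` and `x, y, t, c > 0`,
`∫_{S^{d-1}} exp(-|𝚡 - yξ|²/(ct)) dσ(ξ)
  = (2π)^{ν+1} exp(-(x²+y²)/(ct)) (ct/(2xy))^ν I_ν(2xy/(ct))`,
where `𝚡 = (x,0,…,0)` and `σ` is the (non-normalized) surface measure of the unit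
sphere `S^{d-1} ⊂ ℝ^d`. -/
theorem sphere_integral_bessel (d : ℕ) (hd : 0 < d) (x y t c : ℝ)
    (hx : 0 < x) (hy : 0 < y) (ht : 0 < t) (hc : 0 < c) :
    ∫ ξ : Metric.sphere (0 : EuclideanSpace ℝ (Fin d)) 1,
        Real.exp (-‖EuclideanSpace.single (⟨0, hd⟩ : Fin d) x -
            y • (ξ : EuclideanSpace ℝ (Fin d))‖ ^ 2 / (c * t))
        ∂(volume : Measure (EuclideanSpace ℝ (Fin d))).toSphere =
      (2 * π) ^ ((d : ℝ) / 2 - 1 + 1) * Real.exp (-(x ^ 2 + y ^ 2) / (c * t)) *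
        (c * t / (2 * x * y)) ^ ((d : ℝ) / 2 - 1) *
        besselI ((d : ℝ) / 2 - 1) (2 * x * y / (c * t)) := by
  have hct : 0 < c * t := mul_pos hc ht
  set i₀ : Fin d := ⟨0, hd⟩ with hi₀
  set a := 2 * x * y / (c * t) with ha_def
  have ha : 0 < a := by positivity
  have hhalf : (0:ℝ) < a / 2 := by positivity
  set ν : ℝ := (d : ℝ) / 2 - 1 with hν
  have hpt : ∀ ξ : sphere (0 : EuclideanSpace ℝ (Fin d)) 1,
      rexp (-‖EuclideanSpace.single i₀ x - y • (ξ : EuclideanSpace ℝ (Fin d))‖ ^ 2 / (c * t))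
      = rexp (-(x ^ 2 + y ^ 2) / (c * t)) *
          rexp (a * ((ξ : EuclideanSpace ℝ (Fin d)) i₀)) := by
    intro ξ
    have hξ : ‖(ξ : EuclideanSpace ℝ (Fin d))‖ = 1 := mem_sphere_zero_iff_norm.mp ξ.2
    have hns : ‖EuclideanSpace.single i₀ x - y • (ξ : EuclideanSpace ℝ (Fin d))‖ ^ 2
        = x ^ 2 + y ^ 2 - 2 * x * y * ((ξ : EuclideanSpace ℝ (Fin d)) i₀) := by
      rw [norm_sub_sq_real, EuclideanSpace.norm_single, real_inner_smul_right,
        EuclideanSpace.inner_single_left, norm_smul, hξ]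
      simp only [RCLike.star_def, starRingEnd_apply, star_trivial, Real.norm_eq_abs,
        abs_of_pos hx, abs_of_pos hy]
      ring
    rw [hns, ← Real.exp_add]
    congr 1
    have hctne : c * t ≠ 0 := ne_of_gt hct
    rw [ha_def]
    field_simp
    ring
  rw [integral_congr_ae (Filter.Eventually.of_forall hpt), MeasureTheory.integral_const_mul,
    sphere_exp_integral hd i₀ ha]
  have hbessel : besselI ν a = (a / 2) ^ ν *
      ∑' k : ℕ, (a / 2) ^ (2 * k) / (k.factorial * Real.Gamma (k + (d : ℝ) / 2)) := by
    rw [besselI, ← tsum_mul_left]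
    apply tsum_congr
    intro k
    rw [show 2 * (k : ℝ) + ν = ((2 * k : ℕ) : ℝ) + ν by push_cast; ring,
      Real.rpow_add hhalf, Real.rpow_natCast,
      show (k : ℝ) + ν + 1 = (k : ℝ) + (d : ℝ) / 2 by rw [hν]; ring]
    ring
  rw [hbessel]
  have h1 : c * t / (2 * x * y) = a⁻¹ := by
    rw [ha_def, inv_div]
  have hkey : (2 * π) ^ (ν + 1) * (c * t / (2 * x * y)) ^ ν * (a / 2) ^ ν
      = 2 * π ^ ((d : ℝ) / 2) := by
    rw [h1, Real.mul_rpow (by norm_num : (0:ℝ) ≤ 2) pi_pos.le, mul_assoc,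
      ← Real.mul_rpow (inv_nonneg.mpr ha.le) hhalf.le,
      show a⁻¹ * (a / 2) = 2⁻¹ by field_simp,
      Real.inv_rpow (by norm_num : (0:ℝ) ≤ 2)]
    have h2 : (2:ℝ) ^ (ν + 1) * ((2:ℝ) ^ ν)⁻¹ = 2 := by
      rw [← Real.rpow_neg (by norm_num : (0:ℝ) ≤ 2), ← Real.rpow_add two_pos]
      norm_num
    have h3 : ν + 1 = (d : ℝ) / 2 := by rw [hν]; ring
    rw [show (2:ℝ) ^ (ν + 1) * π ^ (ν + 1) * ((2:ℝ) ^ ν)⁻¹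
        = ((2:ℝ) ^ (ν + 1) * ((2:ℝ) ^ ν)⁻¹) * π ^ (ν + 1) by ring, h2, h3]
  rw [← hkey]
  ring
end

section
/- For all x, y ∈ (0,1) and t > 0, the Fourier-Bessel Poisson kernel for ν = −1/2 is given by G_t^{−1/2,1}(x,y) = sinh(πt/2) cos(π(x−y)/2) / (cosh(πt) − cos(π(x−y))) + sinh(πt/2) cos(π(x+y)/2) / (cosh(πt) − cos(π(x+y))); that is, ∑_{n≥1} e^{−tπ(n−1/2)} · 2 cos(π(n−1/2)x) cos(π(n−1/2)y) equals the right-hand side. -/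
open Real

lemma fb_aux (a θ : ℝ) (ha : 0 < a) :
    HasSum (fun n : ℕ => Real.exp (-(a * ((n : ℝ) + 1 / 2))) * Real.cos (θ * ((n : ℝ) + 1 / 2)))
      (Real.sinh (a / 2) * Real.cos (θ / 2) / (Real.cosh a - Real.cos θ)) := by
  set c : ℂ := -a + θ * Complex.I with hc
  have hre : c.re = -a := by simp [hc]
  have him : c.im = θ := by simp [hc]
  have hc2re : (c / 2).re = -a / 2 := by rw [Complex.div_ofNat_re, hre]
  have hc2im : (c / 2).im = θ / 2 := by rw [Complex.div_ofNat_im, him]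
  have hnorm : ‖Complex.exp c‖ < 1 := by
    rw [Complex.norm_exp, hre]
    exact Real.exp_lt_one_iff.mpr (by linarith)
  have h1 : HasSum (fun n : ℕ => Complex.exp c ^ n) (1 - Complex.exp c)⁻¹ :=
    hasSum_geometric_of_norm_lt_one hnorm
  have h2 : HasSum (fun n : ℕ => Complex.exp (c * ((n : ℝ) + 1 / 2)))
      (Complex.exp (c / 2) * (1 - Complex.exp c)⁻¹) := by
    have := h1.mul_left (Complex.exp (c / 2))
    refine this.congr_fun fun n => ?_
    rw [← Complex.exp_nat_mul, ← Complex.exp_add]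
    congr 1
    push_cast
    ring
  have h3 := Complex.reCLM.hasSum h2
  have hterm : ∀ n : ℕ, Complex.reCLM (Complex.exp (c * ((n : ℝ) + 1 / 2)))
      = Real.exp (-(a * ((n : ℝ) + 1 / 2))) * Real.cos (θ * ((n : ℝ) + 1 / 2)) := by
    intro n
    simp only [Complex.reCLM_apply, Complex.exp_re]
    have h1' : (c * ((n : ℝ) + 1 / 2)).re = -(a * ((n : ℝ) + 1 / 2)) := by
      simp [Complex.mul_re, hre, him]
    have h2' : (c * ((n : ℝ) + 1 / 2)).im = θ * ((n : ℝ) + 1 / 2) := by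
      simp [Complex.mul_im, hre, him]
    rw [h1', h2']
  have hne : Real.cosh a - Real.cos θ > 0 := by
    have := Real.one_lt_cosh.mpr (ne_of_gt ha)
    have := Real.cos_le_one θ
    linarith
  have hw : (1 - Complex.exp c) ≠ 0 := by
    intro h
    have h' : Complex.exp c = 1 := by linear_combination -h
    rw [h'] at hnorm; simp at hnorm
  set E : ℝ := Real.exp (-a / 2) with hEdef
  have hEpos : 0 < E := Real.exp_pos _
  have hEne : E ≠ 0 := ne_of_gt hEpos
  have hEa : Real.exp (-a) = E ^ 2 := by
    rw [hEdef, sq, ← Real.exp_add]; ring_nf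
  have hK2 : 2 * E ^ 2 * Real.cosh a = 1 + E ^ 4 := by
    have ha2' : Real.exp (-a) * Real.exp a = 1 := by rw [← Real.exp_add]; simp
    rw [Real.cosh_eq]
    linear_combination ha2' + (E ^ 2 - Real.exp a) * hEa
  have hsinh : Real.sinh (a / 2) = (E⁻¹ - E) / 2 := by
    rw [Real.sinh_eq, hEdef, ← Real.exp_neg]; ring_nf
  have hval : (Complex.exp (c / 2) * (1 - Complex.exp c)⁻¹).re
      = Real.sinh (a / 2) * Real.cos (θ / 2) / (Real.cosh a - Real.cos θ) := by
    rw [← div_eq_mul_inv, Complex.div_re]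
    have hzre : (Complex.exp (c / 2)).re = E * Real.cos (θ / 2) := by
      rw [Complex.exp_re, hc2re, hc2im, hEdef]
    have hzim : (Complex.exp (c / 2)).im = E * Real.sin (θ / 2) := by
      rw [Complex.exp_im, hc2re, hc2im, hEdef]
    have hwre : (1 - Complex.exp c).re = 1 - E ^ 2 * Real.cos θ := by
      simp [Complex.exp_re, hre, him, hEa]
    have hwim : (1 - Complex.exp c).im = -(E ^ 2 * Real.sin θ) := by
      simp [Complex.exp_im, hre, him, hEa]
    have hns : Complex.normSq (1 - Complex.exp c)
        = (1 - E ^ 2 * Real.cos θ) ^ 2 + (E ^ 2 * Real.sin θ) ^ 2 := by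
      rw [Complex.normSq_apply, hwre, hwim]; ring
    have ccs : Real.cos θ * Real.cos (θ / 2) + Real.sin θ * Real.sin (θ / 2)
        = Real.cos (θ / 2) := by
      rw [← Real.cos_sub]; congr 1; ring
    have pyth : Real.sin θ ^ 2 + Real.cos θ ^ 2 = 1 := Real.sin_sq_add_cos_sq θ
    have hNSval : (1 - E ^ 2 * Real.cos θ) ^ 2 + (E ^ 2 * Real.sin θ) ^ 2
        = 2 * E ^ 2 * (Real.cosh a - Real.cos θ) := by
      linear_combination E ^ 4 * pyth - hK2
    have hNSpos : (0:ℝ) < (1 - E ^ 2 * Real.cos θ) ^ 2 + (E ^ 2 * Real.sin θ) ^ 2 := by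
      rw [hNSval]; positivity
    have hEE : E⁻¹ * E = 1 := inv_mul_cancel₀ hEne
    rw [hzre, hzim, hwre, hwim, hns, ← add_div, hsinh,
      div_eq_div_iff (ne_of_gt hNSpos) (ne_of_gt hne), hNSval]
    linear_combination (Real.cosh a - Real.cos θ) * (-E ^ 3) * ccs
      + (Real.cosh a - Real.cos θ) * (-(E * Real.cos (θ / 2))) * hEE
  rw [← hval]
  exact h3.congr_fun fun n => (hterm n).symm

/-- The explicit formula for the Fourier–Bessel Poisson kernel `G_t^{-1/2,1}(x,y)`:
`∑_{n≥1} e^{-tπ(n-1/2)} 2 cos(π(n-1/2)x) cos(π(n-1/2)y)` (here the sum over `n ≥ 1`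
is written as a sum over `n : ℕ` via `n - 1/2 ↦ n + 1/2`). -/
theorem fb_poisson_kernel_neg_half (t x y : ℝ) (ht : 0 < t)
    (hx : x ∈ Set.Ioo (0 : ℝ) 1) (hy : y ∈ Set.Ioo (0 : ℝ) 1) :
    ∑' n : ℕ, Real.exp (-t * (π * ((n : ℝ) + 1 / 2))) *
        (2 * Real.cos (π * ((n : ℝ) + 1 / 2) * x) * Real.cos (π * ((n : ℝ) + 1 / 2) * y)) =
      Real.sinh (π * t / 2) * Real.cos (π * (x - y) / 2) /
          (Real.cosh (π * t) - Real.cos (π * (x - y))) +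
        Real.sinh (π * t / 2) * Real.cos (π * (x + y) / 2) /
          (Real.cosh (π * t) - Real.cos (π * (x + y))) := by
  have hpt : 0 < π * t := mul_pos Real.pi_pos ht
  have h1 := fb_aux (π * t) (π * (x - y)) hpt
  have h2 := fb_aux (π * t) (π * (x + y)) hpt
  have hsum := h1.add h2
  rw [← hsum.tsum_eq]
  apply tsum_congr
  intro n
  rw [show -t * (π * ((n : ℝ) + 1 / 2)) = -(π * t * ((n : ℝ) + 1 / 2)) by ring,
    show π * ((n : ℝ) + 1 / 2) * x
      = (π * (x + y) * ((n : ℝ) + 1 / 2) + π * (x - y) * ((n : ℝ) + 1 / 2)) / 2 by ring,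
    show π * ((n : ℝ) + 1 / 2) * y
      = (π * (x + y) * ((n : ℝ) + 1 / 2) - π * (x - y) * ((n : ℝ) + 1 / 2)) / 2 by ring,
    ← Real.cos_add_cos]
  ring
end

section
/- For all x, y ∈ (0,1) and t > 0, the Fourier-Bessel heat kernel for ν = −1/2 satisfies G_t^{−1/2,2}(x,y) = ∑_{j∈ℤ} [ (4πt)^{−1/2} exp(−(x−y−4j)²/(4t)) + (4πt)^{−1/2} exp(−(x+y−4j)²/(4t)) − (4πt)^{−1/2} exp(−(x−y−4(j+1/2))²/(4t)) − (4πt)^{−1/2} exp(−(x+y−4(j+1/2))²/(4t)) ]; that is, ∑_{n≥1} e^{−tπ²(n−1/2)²} · 2 cos(π(n−1/2)x) cos(π(n−1/2)y) equals the right-hand side. -/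
open Real Complex

private lemma summable_cexp_quad {a : ℝ} (ha : 0 < a) (b : ℝ) :
    Summable (fun n : ℤ => Complex.exp (-(π:ℂ) * a * n ^ 2 + 2 * π * b * n)) := by
  have h := (summable_jacobiTheta₂_term_iff (-(b : ℂ) * Complex.I) ((a : ℂ) * Complex.I)).mpr
    (by simpa using ha)
  refine h.congr fun n => ?_
  simp only [jacobiTheta₂_term]
  congr 1
  ring_nf
  simp [Complex.I_sq]
  ring

private lemma summable_rexp_quad {a : ℝ} (ha : 0 < a) (b : ℝ) :
    Summable (fun n : ℤ => Real.exp (-π * a * n ^ 2 + 2 * π * b * n)) := by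
  rw [← Complex.summable_ofReal]
  exact (summable_cexp_quad ha b).congr fun n => by push_cast [Complex.ofReal_exp]; ring_nf

private lemma gauss_exponent {t : ℝ} (ht : 0 < t) (u : ℝ) (j : ℤ) :
    -(u - 4 * (j:ℝ)) ^ 2 / (4 * t)
      = -u ^ 2 / (4 * t) + (-π * (4 / (π * t)) * (j:ℝ) ^ 2 + 2 * π * (u / (π * t)) * (j:ℝ)) := by
  have hπ : (π:ℝ) ≠ 0 := Real.pi_ne_zero
  field_simp
  ring

private lemma summable_gauss {t : ℝ} (ht : 0 < t) (u : ℝ) :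
    Summable (fun j : ℤ => Real.exp (-(u - 4 * (j:ℝ)) ^ 2 / (4 * t))) := by
  have ha : 0 < 4 / (π * t) := by positivity
  have h := (summable_rexp_quad ha (u / (π * t))).mul_left (Real.exp (-u ^ 2 / (4 * t)))
  exact h.congr fun j => by rw [← Real.exp_add, ← gauss_exponent ht]

private lemma sqrt_a_eq {t : ℝ} (ht : 0 < t) :
    (1 : ℂ) / ((4 / (π * t) : ℝ) : ℂ) ^ (1/2 : ℂ) = ((Real.sqrt (π * t) / 2 : ℝ) : ℂ) := by
  have hπt : 0 < π * t := by positivity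
  have h4 : (0:ℝ) ≤ 4 / (π * t) := by positivity
  rw [show ((1:ℂ)/2) = ((1/2 : ℝ) : ℂ) by norm_num, ← Complex.ofReal_cpow h4,
    ← Real.sqrt_eq_rpow, ← Complex.ofReal_one, ← Complex.ofReal_div, Complex.ofReal_inj]
  rw [show (4 : ℝ) / (π * t) = (2 / Real.sqrt (π * t)) ^ 2 by
      rw [div_pow, Real.sq_sqrt hπt.le]; norm_num,
    Real.sqrt_sq (by positivity)]
  have hs : Real.sqrt (π * t) ≠ 0 := by positivity
  field_simp

private lemma gauss_sum_eq {t : ℝ} (ht : 0 < t) (u : ℝ) :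
    ∑' j : ℤ, (Real.exp (-(u - 4 * (j:ℝ)) ^ 2 / (4 * t)) : ℂ)
      = ((Real.sqrt (π * t) / 2 : ℝ) : ℂ) *
        ∑' n : ℤ, (Real.exp (-(π ^ 2 * t * (n:ℝ) ^ 2) / 4) : ℂ) *
          Complex.exp (-(Complex.I * π * u * n) / 2) := by
  have hπt : 0 < π * t := by positivity
  have hπ : (π:ℝ) ≠ 0 := Real.pi_ne_zero
  have ht' : t ≠ 0 := ht.ne'
  have hare : (0:ℝ) < (((4 / (π * t) : ℝ) : ℂ)).re := by
    rw [Complex.ofReal_re]; positivity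
  have step1 : ∑' j : ℤ, (Real.exp (-(u - 4 * (j:ℝ)) ^ 2 / (4 * t)) : ℂ)
      = ((Real.exp (-u ^ 2 / (4 * t)) : ℝ) : ℂ) *
        ∑' j : ℤ, Complex.exp (-(π:ℂ) * ((4 / (π * t) : ℝ) : ℂ) * (j:ℤ) ^ 2
          + 2 * (π:ℂ) * ((u / (π * t) : ℝ) : ℂ) * (j:ℤ)) := by
    rw [← tsum_mul_left]
    refine tsum_congr fun j => ?_
    rw [gauss_exponent ht u j, Real.exp_add, Complex.ofReal_mul]
    congr 1
    rw [Complex.ofReal_exp]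
    congr 1
    push_cast
    ring
  rw [step1, Complex.tsum_exp_neg_quadratic hare]
  have step3 : ∑' n : ℤ, Complex.exp (-(π:ℂ) / ((4 / (π * t) : ℝ) : ℂ) *
        ((n:ℤ) + Complex.I * ((u / (π * t) : ℝ) : ℂ)) ^ 2)
      = ((Real.exp (u ^ 2 / (4 * t)) : ℝ) : ℂ) *
        ∑' n : ℤ, (Real.exp (-(π ^ 2 * t * (n:ℝ) ^ 2) / 4) : ℂ) *
          Complex.exp (-(Complex.I * π * u * n) / 2) := by
    rw [← tsum_mul_left]
    refine tsum_congr fun n => ?_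
    rw [Complex.ofReal_exp, Complex.ofReal_exp, ← mul_assoc, ← Complex.exp_add, ← Complex.exp_add]
    congr 1
    have hπc : ((π:ℝ):ℂ) ≠ 0 := Complex.ofReal_ne_zero.mpr hπ
    have htc : ((t:ℝ):ℂ) ≠ 0 := Complex.ofReal_ne_zero.mpr ht'
    push_cast
    field_simp
    ring_nf
    simp [Complex.I_sq]
  rw [step3, sqrt_a_eq ht]
  have key : ((Real.exp (-u ^ 2 / (4 * t)) : ℝ) : ℂ) * ((Real.exp (u ^ 2 / (4 * t)) : ℝ) : ℂ) = 1 := by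
    rw [← Complex.ofReal_mul, ← Real.exp_add, ← Complex.ofReal_one, Complex.ofReal_inj,
      ← Real.exp_zero]
    congr 1
    ring
  rw [mul_left_comm]
  congr 1
  rw [← mul_assoc, key, one_mul]

lemma summable_A {t : ℝ} (ht : 0 < t) (u : ℝ) :
    Summable (fun n : ℤ => (Real.exp (-(π ^ 2 * t * (n:ℝ) ^ 2) / 4) : ℂ) *
      Complex.exp (-(Complex.I * π * u * n) / 2)) := by
  apply Summable.of_norm
  have h : Summable (fun n : ℤ => Real.exp (-(π ^ 2 * t * (n:ℝ) ^ 2) / 4)) := by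
    refine (summable_rexp_quad (a := π * t / 4) (by positivity) 0).congr fun n => ?_
    congr 1
    ring
  refine h.congr fun n => ?_
  rw [norm_mul, Complex.norm_real, Real.norm_eq_abs, abs_of_pos (Real.exp_pos _),
    Complex.norm_exp]
  have : (-(Complex.I * π * u * n) / 2).re = 0 := by simp
  rw [this, Real.exp_zero, mul_one]

private lemma summable_exp_half {t : ℝ} (ht : 0 < t) :
    Summable (fun n : ℕ => Real.exp (-t * π ^ 2 * ((n:ℝ) + 1/2) ^ 2)) := by
  have hlt : Real.exp (-t * π ^ 2) < 1 := by
    rw [Real.exp_lt_one_iff]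
    have := mul_pos ht (pow_pos Real.pi_pos 2)
    linarith
  refine Summable.of_nonneg_of_le (fun n => (Real.exp_pos _).le) (fun n => ?_)
    (summable_geometric_of_lt_one (Real.exp_pos _).le hlt)
  rw [← Real.exp_nat_mul]
  apply Real.exp_le_exp.mpr
  have h := mul_nonneg (mul_pos ht (pow_pos Real.pi_pos 2)).le
    (by positivity : (0:ℝ) ≤ (n:ℝ) ^ 2 + 1/4)
  nlinarith [h]

private lemma key_sum {t : ℝ} (ht : 0 < t) (u : ℝ) :
    ∑' j : ℤ, (1 / Real.sqrt (4 * π * t) * Real.exp (-(u - 4 * (j:ℝ)) ^ 2 / (4 * t))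
      - 1 / Real.sqrt (4 * π * t) * Real.exp (-(u - 4 * ((j:ℝ) + 1/2)) ^ 2 / (4 * t)))
    = ∑' n : ℕ, Real.exp (-t * π ^ 2 * ((n:ℝ) + 1/2) ^ 2) * Real.cos (π * ((n:ℝ) + 1/2) * u) := by
  have hπt : 0 < π * t := by positivity
  have hsq : Real.sqrt (π * t) ≠ 0 := by positivity
  apply Complex.ofReal_injective
  rw [Complex.ofReal_tsum, Complex.ofReal_tsum]
  -- complex summability of the two Gaussian families
  have h1 : Summable (fun j : ℤ => (Real.exp (-(u - 4 * (j:ℝ)) ^ 2 / (4 * t)) : ℂ)) :=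
    Complex.summable_ofReal.mpr (summable_gauss ht u)
  have h2 : Summable (fun j : ℤ => (Real.exp (-((u - 2) - 4 * (j:ℝ)) ^ 2 / (4 * t)) : ℂ)) :=
    Complex.summable_ofReal.mpr (summable_gauss ht (u - 2))
  have hshift : ∀ j : ℤ, Real.exp (-(u - 4 * ((j:ℝ) + 1/2)) ^ 2 / (4 * t))
      = Real.exp (-((u - 2) - 4 * (j:ℝ)) ^ 2 / (4 * t)) := fun j => by congr 1; ring
  have step1 : ∑' j : ℤ, ((1 / Real.sqrt (4 * π * t) * Real.exp (-(u - 4 * (j:ℝ)) ^ 2 / (4 * t))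
        - 1 / Real.sqrt (4 * π * t) * Real.exp (-(u - 4 * ((j:ℝ) + 1/2)) ^ 2 / (4 * t)) : ℝ) : ℂ)
      = ((1 / Real.sqrt (4 * π * t) : ℝ) : ℂ) *
        ((∑' j : ℤ, (Real.exp (-(u - 4 * (j:ℝ)) ^ 2 / (4 * t)) : ℂ))
          - ∑' j : ℤ, (Real.exp (-((u - 2) - 4 * (j:ℝ)) ^ 2 / (4 * t)) : ℂ)) := by
    rw [← Summable.tsum_sub h1 h2, ← tsum_mul_left]
    refine tsum_congr fun j => ?_
    rw [hshift j]
    push_cast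
    ring
  rw [step1, gauss_sum_eq ht u, gauss_sum_eq ht (u - 2)]
  rw [← mul_sub, ← Summable.tsum_sub (summable_A ht u) (summable_A ht (u - 2)), ← mul_assoc,
    ← Complex.ofReal_mul]
  have hc : (1 / Real.sqrt (4 * π * t) * (Real.sqrt (π * t) / 2) : ℝ) = 1 / 4 := by
    rw [show (4 : ℝ) * π * t = (2 * Real.sqrt (π * t)) ^ 2 by
        rw [mul_pow, Real.sq_sqrt hπt.le]; ring,
      Real.sqrt_sq (by positivity)]
    field_simp
    ring
  rw [hc]
  -- now reindex the inner ℤ-sum over odd integers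
  set F : ℤ → ℂ := fun n => (Real.exp (-(π ^ 2 * t * (n:ℝ) ^ 2) / 4) : ℂ) *
      Complex.exp (-(Complex.I * π * u * n) / 2)
    - (Real.exp (-(π ^ 2 * t * (n:ℝ) ^ 2) / 4) : ℂ) *
      Complex.exp (-(Complex.I * π * ((u - 2 : ℝ) : ℂ) * n) / 2) with hF
  have hFsum : ∑' n : ℤ, ((Real.exp (-(π ^ 2 * t * (n:ℝ) ^ 2) / 4) : ℂ) *
        Complex.exp (-(Complex.I * π * u * n) / 2)
      - (Real.exp (-(π ^ 2 * t * (n:ℝ) ^ 2) / 4) : ℂ) *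
        Complex.exp (-(Complex.I * π * ((u - 2 : ℝ) : ℂ) * n) / 2)) = ∑' n : ℤ, F n := rfl
  rw [hFsum]
  have hinj : Function.Injective (fun m : ℤ => 2 * m + 1) := fun a b h => by dsimp at h; omega
  have hvanish : ∀ x : ℤ, x ∉ Set.range (fun m : ℤ => 2 * m + 1) → F x = 0 := by
    intro x hx
    have hev : Even x := by
      rcases Int.even_or_odd x with h | h
      · exact h
      · obtain ⟨k, hk⟩ := h
        exact absurd ⟨k, by dsimp; omega⟩ hx
    obtain ⟨k, hk⟩ := hev
    have : Complex.exp (-(Complex.I * π * ((u - 2 : ℝ) : ℂ) * x) / 2)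
        = Complex.exp (-(Complex.I * π * u * x) / 2) := by
      rw [show -(Complex.I * π * ((u - 2 : ℝ) : ℂ) * (x:ℂ)) / 2
          = -(Complex.I * π * u * x) / 2 + (k : ℤ) * (2 * π * Complex.I) by
        push_cast [hk]; ring, Complex.exp_add, Complex.exp_int_mul_two_pi_mul_I, mul_one]
    rw [hF]
    simp only [this, sub_self]
  have hodd : ∑' m : ℤ, F (2 * m + 1) = ∑' n : ℤ, F n :=
    hinj.tsum_eq (fun x hx => by by_contra h; exact hx (hvanish x h))
  rw [← hodd]
  have hterm : ∀ m : ℤ, F (2 * m + 1)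
      = 2 * ((Real.exp (-t * π ^ 2 * ((m:ℝ) + 1/2) ^ 2) : ℂ) *
          Complex.exp (-(Complex.I * π * ((m:ℂ) + 1/2) * u))) := by
    intro m
    rw [hF]
    have hA : (Real.exp (-(π ^ 2 * t * ((2 * m + 1 : ℤ):ℝ) ^ 2) / 4) : ℝ)
        = Real.exp (-t * π ^ 2 * ((m:ℝ) + 1/2) ^ 2) := by congr 1; push_cast; ring
    have hB2 : Complex.exp (-(Complex.I * π * ((u - 2 : ℝ) : ℂ) * ((2 * m + 1 : ℤ):ℂ)) / 2)
        = - Complex.exp (-(Complex.I * π * u * ((2 * m + 1 : ℤ):ℂ)) / 2) := by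
      rw [show -(Complex.I * π * ((u - 2 : ℝ) : ℂ) * ((2 * m + 1 : ℤ):ℂ)) / 2
          = -(Complex.I * π * u * ((2 * m + 1 : ℤ):ℂ)) / 2 + ((m : ℂ) * (2 * π * Complex.I)
            + π * Complex.I) by push_cast; ring,
        Complex.exp_add, Complex.exp_add, Complex.exp_int_mul_two_pi_mul_I,
        Complex.exp_pi_mul_I]
      ring
    dsimp only
    rw [hA, hB2, show -(Complex.I * ↑π * ↑u * ((2 * m + 1 : ℤ):ℂ)) / 2
        = -(Complex.I * ↑π * ((m:ℂ) + 1/2) * ↑u) by push_cast; ring]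
    ring
  rw [tsum_congr hterm, tsum_mul_left]
  set g : ℤ → ℂ := fun m => ((Real.exp (-t * π ^ 2 * ((m:ℝ) + 1/2) ^ 2) : ℝ) : ℂ) *
    Complex.exp (-(Complex.I * ↑π * ((m:ℂ) + 1/2) * ↑u)) with hg
  have hnorm : ∀ m : ℤ, ‖g m‖ = Real.exp (-t * π ^ 2 * ((m:ℝ) + 1/2) ^ 2) := by
    intro m
    rw [hg]
    dsimp only
    rw [norm_mul, Complex.norm_real, Real.norm_eq_abs, abs_of_pos (Real.exp_pos _),
      Complex.norm_exp]
    have : (-(Complex.I * ↑π * ((m:ℂ) + 1/2) * ↑u)).re = 0 := by simp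
    rw [this, Real.exp_zero, mul_one]
  have hg1 : Summable fun n : ℕ => g (n : ℤ) := by
    apply Summable.of_norm
    refine (summable_exp_half ht).congr fun n => ?_
    rw [hnorm]
    norm_num
  have hg2 : Summable fun n : ℕ => g (-((n : ℤ) + 1)) := by
    apply Summable.of_norm
    refine (summable_exp_half ht).congr fun n => ?_
    rw [hnorm]
    congr 2
    push_cast
    ring
  rw [tsum_of_nat_of_neg_add_one hg1 hg2, ← Summable.tsum_add hg1 hg2]
  have hpair : ∀ n : ℕ, g (n : ℤ) + g (-((n : ℤ) + 1))
      = 2 * ((Real.exp (-t * π ^ 2 * ((n:ℝ) + 1/2) ^ 2) *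
          Real.cos (π * ((n:ℝ) + 1/2) * u) : ℝ) : ℂ) := by
    intro n
    rw [hg]
    dsimp only
    have e1 : Real.exp (-t * π ^ 2 * (((-((n:ℤ) + 1) : ℤ):ℝ) + 1/2) ^ 2)
        = Real.exp (-t * π ^ 2 * ((n:ℝ) + 1/2) ^ 2) := by congr 1; push_cast; ring
    have e2 : -(Complex.I * ↑π * (((-((n:ℤ) + 1) : ℤ):ℂ) + 1/2) * ↑u)
        = ((π * ((n:ℝ) + 1/2) * u : ℝ) : ℂ) * Complex.I := by push_cast; ring
    have e3 : -(Complex.I * ↑π * (((n:ℤ):ℂ) + 1/2) * ↑u)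
        = -((π * ((n:ℝ) + 1/2) * u : ℝ) : ℂ) * Complex.I := by push_cast; ring
    have e0 : Real.exp (-t * π ^ 2 * ((((n:ℤ)):ℝ) + 1/2) ^ 2)
        = Real.exp (-t * π ^ 2 * ((n:ℝ) + 1/2) ^ 2) := by norm_num
    rw [e0, e1, e2, e3, ← mul_add,
      add_comm (Complex.exp (-((π * ((n:ℝ) + 1/2) * u : ℝ) : ℂ) * Complex.I)),
      ← Complex.two_cos, ← Complex.ofReal_cos]
    push_cast
    ring
  rw [tsum_congr hpair, tsum_mul_left, show ((1/4 : ℝ) : ℂ) = 1/4 by norm_num]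
  ring


private lemma summable_exp_cos {t : ℝ} (ht : 0 < t) (u : ℝ) :
    Summable fun n : ℕ => Real.exp (-t * π ^ 2 * ((n:ℝ) + 1/2) ^ 2) *
      Real.cos (π * ((n:ℝ) + 1/2) * u) := by
  apply Summable.of_abs
  refine Summable.of_nonneg_of_le (fun n => abs_nonneg _) (fun n => ?_) (summable_exp_half ht)
  rw [abs_mul, abs_of_pos (Real.exp_pos _)]
  exact mul_le_of_le_one_right (Real.exp_pos _).le (Real.abs_cos_le_one _)

private lemma summable_piece {t : ℝ} (ht : 0 < t) (u : ℝ) :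
    Summable fun j : ℤ => (1 / Real.sqrt (4 * π * t) * Real.exp (-(u - 4 * (j:ℝ)) ^ 2 / (4 * t))
      - 1 / Real.sqrt (4 * π * t) * Real.exp (-(u - 4 * ((j:ℝ) + 1/2)) ^ 2 / (4 * t))) := by
  apply Summable.sub ((summable_gauss ht u).mul_left _)
  refine ((summable_gauss ht (u - 2)).mul_left (1 / Real.sqrt (4 * π * t))).congr fun j => ?_
  congr 2
  ring

/-- The Jacobi-type identity for the Fourier–Bessel heat kernel `G_t^{-1/2,2}(x,y)`:
`∑_{n≥1} e^{-tπ²(n-1/2)²} 2 cos(π(n-1/2)x) cos(π(n-1/2)y)` equals a sum of Gaussians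
over `ℤ` (the sum over `n ≥ 1` is written as a sum over `n : ℕ` via `n - 1/2 ↦ n + 1/2`). -/
theorem fb_heat_kernel_neg_half (t x y : ℝ) (ht : 0 < t)
    (hx : x ∈ Set.Ioo (0 : ℝ) 1) (hy : y ∈ Set.Ioo (0 : ℝ) 1) :
    ∑' n : ℕ, Real.exp (-t * π ^ 2 * ((n : ℝ) + 1 / 2) ^ 2) *
        (2 * Real.cos (π * ((n : ℝ) + 1 / 2) * x) * Real.cos (π * ((n : ℝ) + 1 / 2) * y)) =
      ∑' j : ℤ,
        (1 / Real.sqrt (4 * π * t) * Real.exp (-(x - y - 4 * (j : ℝ)) ^ 2 / (4 * t)) +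
          1 / Real.sqrt (4 * π * t) * Real.exp (-(x + y - 4 * (j : ℝ)) ^ 2 / (4 * t)) -
          1 / Real.sqrt (4 * π * t) *
            Real.exp (-(x - y - 4 * ((j : ℝ) + 1 / 2)) ^ 2 / (4 * t)) -
          1 / Real.sqrt (4 * π * t) *
            Real.exp (-(x + y - 4 * ((j : ℝ) + 1 / 2)) ^ 2 / (4 * t))) := by
  have hcos : ∀ n : ℕ, Real.exp (-t * π ^ 2 * ((n : ℝ) + 1 / 2) ^ 2) *
        (2 * Real.cos (π * ((n : ℝ) + 1 / 2) * x) * Real.cos (π * ((n : ℝ) + 1 / 2) * y))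
      = Real.exp (-t * π ^ 2 * ((n : ℝ) + 1 / 2) ^ 2) *
          Real.cos (π * ((n : ℝ) + 1 / 2) * (x - y))
        + Real.exp (-t * π ^ 2 * ((n : ℝ) + 1 / 2) ^ 2) *
          Real.cos (π * ((n : ℝ) + 1 / 2) * (x + y)) := by
    intro n
    rw [show π * ((n : ℝ) + 1 / 2) * (x - y)
        = π * ((n : ℝ) + 1 / 2) * x - π * ((n : ℝ) + 1 / 2) * y by ring,
      show π * ((n : ℝ) + 1 / 2) * (x + y)
        = π * ((n : ℝ) + 1 / 2) * x + π * ((n : ℝ) + 1 / 2) * y by ring,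
      Real.cos_sub, Real.cos_add]
    ring
  rw [tsum_congr hcos, Summable.tsum_add (summable_exp_cos ht (x - y)) (summable_exp_cos ht (x + y)),
    ← key_sum ht (x - y), ← key_sum ht (x + y)]
  rw [← Summable.tsum_add (summable_piece ht (x - y)) (summable_piece ht (x + y))]
  exact tsum_congr fun j => by ring
end
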